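/- arXiv:1009.4169 — 4 statements merged into one kernel-verified Lean document; each statement's English description precedes it below -/
import Mathlib

section
/- Let d ≥ 2 and let μ be a Frostman probability measure with exponent s > d−1 supported on a set E ⊆ [0,1]^d. Then there exist constants c₁ > 0 and c₂ > 0, Borel subsets E₁, E₂ ⊆ E with μ(E₁) ≥ c₁ and μ(E₂) ≥ c₁, and a coordinate index k ∈ {1, …, d} such that |x_k − y_k| ≥ c₂ for every x ∈ E₁ and every y ∈ E₂. -/
open MeasureTheory Metric ENNReal

lemma coord_grid_bound (δ : ℝ) (hδ : 0 < δ) (n : ℕ) (hn1 : 1 ≤ n) (hn : 1 ≤ (n:ℝ) * δ)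
    (u : ℝ) (hu0 : 0 ≤ u) (hu1 : u ≤ 1) :
    |u - (min ⌊u / δ⌋₊ (n-1) : ℕ) * δ| ≤ δ := by
  rcases le_or_gt ⌊u / δ⌋₊ (n-1) with h | h
  · rw [min_eq_left h]
    have h1 : (⌊u / δ⌋₊ : ℝ) * δ ≤ u := by
      have := Nat.floor_le (by positivity : (0:ℝ) ≤ u / δ)
      calc (⌊u / δ⌋₊ : ℝ) * δ ≤ (u/δ) * δ := by nlinarith
        _ = u := by field_simp
    have h2 : u < (⌊u / δ⌋₊ + 1 : ℝ) * δ := by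
      have := Nat.lt_floor_add_one (u / δ)
      calc u = (u/δ)*δ := by field_simp
        _ < (⌊u / δ⌋₊ + 1 : ℝ) * δ := by nlinarith
    rw [abs_le]; constructor <;> nlinarith
  · rw [min_eq_right h.le]
    have hnf : (n:ℝ) ≤ u / δ := by
      have : n ≤ ⌊u / δ⌋₊ := by omega
      exact_mod_cast le_trans (Nat.cast_le.mpr this) (Nat.floor_le (by positivity))
    have : (n:ℝ) * δ ≤ u := by
      calc (n:ℝ)*δ ≤ (u/δ)*δ := by nlinarith
        _ = u := by field_simp
    have hcast : ((n-1:ℕ):ℝ) = (n:ℝ) - 1 := by rw [Nat.cast_sub hn1]; simp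
    rw [hcast, abs_le]
    constructor <;> nlinarith

lemma slab_bound (d : ℕ) (hd : 2 ≤ d) (k : Fin d)
    (E : Set (EuclideanSpace ℝ (Fin d)))
    (hE : E ⊆ {x : EuclideanSpace ℝ (Fin d) | ∀ i, x i ∈ Set.Icc (0 : ℝ) 1})
    (μ : Measure (EuclideanSpace ℝ (Fin d)))
    (C₀ s : ℝ)
    (hfrost : ∀ (x : EuclideanSpace ℝ (Fin d)) (r : ℝ), 0 < r →
      μ (ball x r) ≤ ENNReal.ofReal (C₀ * r ^ s))
    (δ t : ℝ) (hδ : 0 < δ) (hδ1 : δ ≤ 1) :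
    μ (E ∩ {x | t ≤ x k ∧ x k ≤ t + δ}) ≤
      ((⌈1/δ⌉₊ : ℝ≥0∞)) ^ (d-1) * ENNReal.ofReal (C₀ * (2 * Real.sqrt d * δ) ^ s) := by
  set n := ⌈1/δ⌉₊ with hn
  have hn1 : 1 ≤ n := Nat.ceil_pos.mpr (by positivity)
  have hnδ : 1 ≤ (n:ℝ) * δ := by
    have h1 : (1/δ : ℝ) ≤ n := Nat.le_ceil _
    calc (1:ℝ) = (1/δ)*δ := by field_simp
      _ ≤ (n:ℝ)*δ := by nlinarith
  set r := 2 * Real.sqrt d * δ with hr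
  have hd0 : (0:ℝ) < Real.sqrt d := Real.sqrt_pos.mpr (by positivity)
  have hrpos : 0 < r := by positivity
  set center : ({i : Fin d // i ≠ k} → Fin n) → EuclideanSpace ℝ (Fin d) :=
    fun f => WithLp.toLp 2 (fun i => if h : i = k then t else ((f ⟨i, h⟩ : ℕ) : ℝ) * δ) with hcenter
  have hcover : E ∩ {x | t ≤ x k ∧ x k ≤ t + δ} ⊆ ⋃ f, ball (center f) r := by
    rintro x ⟨hxE, hxk1, hxk2⟩
    have hcube := hE hxE
    have hjlt : ∀ i : Fin d, min ⌊x i / δ⌋₊ (n-1) < n := fun i =>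
      lt_of_le_of_lt (min_le_right _ _) (by omega)
    set f0 : {i : Fin d // i ≠ k} → Fin n := fun p => ⟨min ⌊x p.1 / δ⌋₊ (n-1), hjlt p.1⟩ with hf0
    refine Set.mem_iUnion.mpr ⟨f0, ?_⟩
    have hcoord : ∀ i : Fin d, |x i - center f0 i| ≤ δ := by
      intro i
      by_cases h : i = k
      · subst h
        simp only [hcenter, PiLp.toLp_apply, dif_pos rfl, ↓reduceDIte]
        rw [abs_le]; constructor <;> linarith
      · simp only [hcenter, hf0, PiLp.toLp_apply, dif_neg h]
        exact coord_grid_bound δ hδ n hn1 hnδ (x i) (hcube i).1 (hcube i).2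
    rw [mem_ball, EuclideanSpace.dist_eq]
    have hsum : (∑ i, dist (x i) (center f0 i) ^ 2) ≤ d * δ^2 := by
      calc (∑ i, dist (x i) (center f0 i) ^ 2) ≤ ∑ _i : Fin d, δ^2 := by
            apply Finset.sum_le_sum
            intro i _
            have := hcoord i
            rw [Real.dist_eq]
            nlinarith [abs_nonneg (x i - center f0 i)]
        _ = d * δ^2 := by simp [Finset.sum_const, nsmul_eq_mul]
    calc Real.sqrt (∑ i, dist (x i) (center f0 i) ^ 2) ≤ Real.sqrt (d * δ^2) :=
          Real.sqrt_le_sqrt hsum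
      _ = Real.sqrt d * δ := by
          rw [Real.sqrt_mul (by positivity), Real.sqrt_sq hδ.le]
      _ < r := by rw [hr]; nlinarith
  calc μ (E ∩ {x | t ≤ x k ∧ x k ≤ t + δ}) ≤ μ (⋃ f, ball (center f) r) := measure_mono hcover
    _ ≤ ∑' f, μ (ball (center f) r) := measure_iUnion_le _
    _ = ∑ f, μ (ball (center f) r) := tsum_fintype _
    _ ≤ ∑ _f : ({i : Fin d // i ≠ k} → Fin n), ENNReal.ofReal (C₀ * r ^ s) :=
        Finset.sum_le_sum (fun f _ => hfrost _ r hrpos)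
    _ = (Fintype.card ({i : Fin d // i ≠ k} → Fin n) : ℝ≥0∞) * ENNReal.ofReal (C₀ * r ^ s) := by
        rw [Finset.sum_const, Finset.card_univ, nsmul_eq_mul]
    _ = ((n : ℝ≥0∞)) ^ (d-1) * ENNReal.ofReal (C₀ * r ^ s) := by
        congr 1
        rw [Fintype.card_fun, Fintype.card_subtype_compl, Fintype.card_subtype_eq,
          Fintype.card_fin, Fintype.card_fin]
        push_cast
        ring

lemma numeric_delta (d : ℕ) (hd : 2 ≤ d) (s C₀ : ℝ) (hC₀ : 0 < C₀) (hs : (d:ℝ)-1 < s) :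
    ∃ δ : ℝ, 0 < δ ∧ δ ≤ 1 ∧
      ((⌈1/δ⌉₊ : ℝ≥0∞)) ^ (d-1) * ENNReal.ofReal (C₀ * (2*Real.sqrt d*δ) ^ s) ≤
        ENNReal.ofReal (1/6) := by
  have hd0 : (0:ℝ) < Real.sqrt d := Real.sqrt_pos.mpr (by positivity)
  set ε := s - ((d:ℝ)-1) with hε_def
  have hε : 0 < ε := by simp [hε_def]; linarith
  have hspos : 0 < s := by
    have h1 : (2:ℝ) ≤ (d:ℝ) := by exact_mod_cast hd
    linarith
  set K := C₀ * 2^(d-1) * (2*Real.sqrt d)^s with hK_def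
  have hK : 0 < K := by
    apply mul_pos (mul_pos hC₀ (by positivity))
    exact Real.rpow_pos_of_pos (by positivity) s
  set δ := min 1 ((1/(6*K)) ^ (1/ε)) with hδ_def
  have hδ0 : 0 < δ := lt_min one_pos (Real.rpow_pos_of_pos (by positivity) _)
  have hδ1 : δ ≤ 1 := min_le_left _ _
  refine ⟨δ, hδ0, hδ1, ?_⟩
  set n := ⌈1/δ⌉₊ with hn_def
  have hnup : (n:ℝ) ≤ 2/δ := by
    have h1 : (n:ℝ) < 1/δ + 1 := Nat.ceil_lt_add_one (by positivity)
    have h2 : (1:ℝ) ≤ 1/δ := by rw [le_div_iff₀ hδ0]; linarith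
    have : 1/δ + 1 ≤ 2/δ := by
      rw [div_add' _ _ _ hδ0.ne', div_le_div_iff₀ hδ0 hδ0]; nlinarith
    linarith
  -- real inequality
  have hreal : (n:ℝ)^(d-1) * (C₀ * (2*Real.sqrt d*δ)^s) ≤ 1/6 := by
    have hsplit : (2*Real.sqrt d*δ)^s = (2*Real.sqrt d)^s * δ^s :=
      Real.mul_rpow (by positivity) hδ0.le
    have hpow : (n:ℝ)^(d-1) ≤ (2/δ)^(d-1) := pow_le_pow_left₀ (by positivity) hnup _
    have hδε : δ^ε ≤ 1/(6*K) := by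
      have h1 : δ ≤ (1/(6*K)) ^ (1/ε) := min_le_right _ _
      have h2 : δ^ε ≤ ((1/(6*K)) ^ (1/ε))^ε := Real.rpow_le_rpow hδ0.le h1 hε.le
      have h3 : ((1/(6*K)) ^ (1/ε))^ε = 1/(6*K) := by
        rw [← Real.rpow_mul (by positivity), one_div_mul_cancel hε.ne', Real.rpow_one]
      linarith
    have hδsub : δ^s / δ^(d-1) = δ^ε := by
      have hc : ((d-1:ℕ):ℝ) = (d:ℝ) - 1 := by
        rw [Nat.cast_sub (by omega)]; simp
      rw [hε_def, Real.rpow_sub hδ0, ← hc, Real.rpow_natCast]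
    calc (n:ℝ)^(d-1) * (C₀ * (2*Real.sqrt d*δ)^s)
        ≤ (2/δ)^(d-1) * (C₀ * ((2*Real.sqrt d)^s * δ^s)) := by
          rw [hsplit]
          apply mul_le_mul_of_nonneg_right hpow
          positivity
      _ = K * (δ^s / δ^(d-1)) := by
          rw [hK_def, div_pow]
          field_simp
      _ = K * δ^ε := by rw [hδsub]
      _ ≤ K * (1/(6*K)) := by
          apply mul_le_mul_of_nonneg_left hδε hK.le
      _ = 1/6 := by field_simp
  calc ((n : ℝ≥0∞)) ^ (d-1) * ENNReal.ofReal (C₀ * (2*Real.sqrt d*δ) ^ s)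
      = ENNReal.ofReal ((n:ℝ)^(d-1)) * ENNReal.ofReal (C₀ * (2*Real.sqrt d*δ) ^ s) := by
        rw [ENNReal.ofReal_pow (Nat.cast_nonneg n), ENNReal.ofReal_natCast]
    _ = ENNReal.ofReal ((n:ℝ)^(d-1) * (C₀ * (2*Real.sqrt d*δ) ^ s)) := by
        rw [← ENNReal.ofReal_mul (by positivity)]
    _ ≤ ENNReal.ofReal (1/6) := ENNReal.ofReal_le_ofReal hreal

theorem two_separated_pieces (d : ℕ) (hd : 2 ≤ d) (s : ℝ) (hs : (d : ℝ) - 1 < s)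
    (E : Set (EuclideanSpace ℝ (Fin d)))
    (hE : E ⊆ {x : EuclideanSpace ℝ (Fin d) | ∀ i, x i ∈ Set.Icc (0 : ℝ) 1})
    (μ : Measure (EuclideanSpace ℝ (Fin d))) [IsProbabilityMeasure μ]
    (hsupp : μ Eᶜ = 0)
    (C₀ : ℝ) (hC₀ : 0 < C₀)
    (hfrost : ∀ (x : EuclideanSpace ℝ (Fin d)) (r : ℝ), 0 < r →
      μ (ball x r) ≤ ENNReal.ofReal (C₀ * r ^ s)) :
    ∃ (c₁ c₂ : ℝ), 0 < c₁ ∧ 0 < c₂ ∧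
      ∃ (E₁ E₂ : Set (EuclideanSpace ℝ (Fin d))),
        MeasurableSet E₁ ∧ MeasurableSet E₂ ∧ E₁ ⊆ E ∧ E₂ ⊆ E ∧
        ENNReal.ofReal c₁ ≤ μ E₁ ∧ ENNReal.ofReal c₁ ≤ μ E₂ ∧
        ∃ k : Fin d, ∀ x ∈ E₁, ∀ y ∈ E₂, c₂ ≤ |x k - y k| := by
  classical
  set k : Fin d := ⟨0, by omega⟩ with hk_def
  obtain ⟨δ, hδ0, hδ1, hnum⟩ := numeric_delta d hd s C₀ hC₀ hs
  -- measurability of half spaces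
  have hmeas_le : ∀ t : ℝ, MeasurableSet {x : EuclideanSpace ℝ (Fin d) | x k ≤ t} :=
    fun t => measurableSet_le (EuclideanSpace.proj k).continuous.measurable measurable_const
  have hmeas_ge : ∀ t : ℝ, MeasurableSet {x : EuclideanSpace ℝ (Fin d) | t ≤ x k} :=
    fun t => measurableSet_le measurable_const (EuclideanSpace.proj k).continuous.measurable
  set third : ℝ≥0∞ := ENNReal.ofReal (1/3) with hthird_def
  set T : Set ℝ := {t : ℝ | third ≤ μ {x | x k ≤ t}} with hT_def
  have hT1 : (1:ℝ) ∈ T := by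
    have hsub : Set.univ ⊆ {x : EuclideanSpace ℝ (Fin d) | x k ≤ 1} ∪ Eᶜ := by
      intro x _
      by_cases hx : x ∈ E
      · exact Or.inl ((hE hx k).2)
      · exact Or.inr hx
    have h1 : (1:ℝ≥0∞) ≤ μ {x | x k ≤ 1} := by
      calc (1:ℝ≥0∞) = μ Set.univ := (measure_univ).symm
        _ ≤ μ ({x : EuclideanSpace ℝ (Fin d) | x k ≤ 1} ∪ Eᶜ) := measure_mono hsub
        _ ≤ μ {x | x k ≤ 1} + μ Eᶜ := measure_union_le _ _
        _ = μ {x | x k ≤ 1} := by rw [hsupp, add_zero]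
    refine le_trans ?_ h1
    rw [hthird_def, ← ENNReal.ofReal_one]
    exact ENNReal.ofReal_le_ofReal (by norm_num)
  have hTbdd : BddBelow T := by
    refine ⟨0, fun t ht => ?_⟩
    by_contra hlt
    push_neg at hlt
    have hsub : {x : EuclideanSpace ℝ (Fin d) | x k ≤ t} ⊆ Eᶜ := by
      intro x hx
      intro hxE
      have := (hE hxE k).1
      simp only [Set.mem_setOf_eq] at hx
      linarith
    have : third ≤ 0 := le_trans ht (le_trans (measure_mono hsub) hsupp.le)
    have h0 : (0:ℝ≥0∞) < third := ENNReal.ofReal_pos.mpr (by norm_num)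
    exact absurd this (not_le.mpr h0)
  set t₀ := sInf T with ht₀_def
  -- μ of the open left half-space at t₀ is ≤ third
  have hlt : μ {x : EuclideanSpace ℝ (Fin d) | x k < t₀} ≤ third := by
    have hUeq : {x : EuclideanSpace ℝ (Fin d) | x k < t₀}
        = ⋃ m : ℕ, {x : EuclideanSpace ℝ (Fin d) | x k ≤ t₀ - 1/(m+1)} := by
      ext x
      simp only [Set.mem_setOf_eq, Set.mem_iUnion]
      constructor
      · intro hx
        obtain ⟨m, hm⟩ := exists_nat_one_div_lt (by linarith : (0:ℝ) < t₀ - x k)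
        exact ⟨m, by linarith⟩
      · rintro ⟨m, hm⟩
        have : (0:ℝ) < 1/((m:ℝ)+1) := by positivity
        linarith
    rw [hUeq]
    have hdir : Directed (· ⊆ ·)
        (fun m : ℕ => {x : EuclideanSpace ℝ (Fin d) | x k ≤ t₀ - 1/(m+1)}) := by
      intro a b
      refine ⟨max a b, ?_, ?_⟩ <;>
      · intro x hx
        simp only [Set.mem_setOf_eq] at hx ⊢
        have ha : ((a:ℕ):ℝ) ≤ ((max a b : ℕ):ℝ) := by exact_mod_cast le_max_left a b
        have hb : ((b:ℕ):ℝ) ≤ ((max a b : ℕ):ℝ) := by exact_mod_cast le_max_right a b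
        have h1 : 1/(((max a b : ℕ):ℝ)+1) ≤ 1/((a:ℝ)+1) := by
          apply one_div_le_one_div_of_le (by positivity)
          linarith
        have h2 : 1/(((max a b : ℕ):ℝ)+1) ≤ 1/((b:ℝ)+1) := by
          apply one_div_le_one_div_of_le (by positivity)
          linarith
        linarith
    rw [Directed.measure_iUnion hdir]
    refine iSup_le fun m => ?_
    have hnotT : (t₀ - 1/((m:ℝ)+1)) ∉ T := by
      intro hmem
      have := csInf_le hTbdd hmem
      have hpos : (0:ℝ) < 1/((m:ℝ)+1) := by positivity
      rw [← ht₀_def] at this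
      linarith
    simp only [hT_def, Set.mem_setOf_eq, not_le] at hnotT
    exact hnotT.le
  -- pick t' ∈ T close to t₀
  have hex : ∃ t' ∈ T, t' < t₀ + δ/3 := by
    by_contra h
    push_neg at h
    have : t₀ + δ/3 ≤ t₀ := le_csInf ⟨1, hT1⟩ h
    linarith
  obtain ⟨t', ht'T, ht'lt⟩ := hex
  have ht'ge : t₀ ≤ t' := csInf_le hTbdd ht'T
  -- slab bound
  have hslab : μ (E ∩ {x | t₀ ≤ x k ∧ x k ≤ t₀ + δ}) ≤ ENNReal.ofReal (1/6) :=
    le_trans (slab_bound d hd k E hE μ C₀ s hfrost δ t₀ hδ0 hδ1) hnum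
  -- measurable hull of Eᶜ
  set N := toMeasurable μ Eᶜ with hN_def
  have hNmeas : MeasurableSet N := measurableSet_toMeasurable μ _
  have hNnull : μ N = 0 := by rw [hN_def, measure_toMeasurable, hsupp]
  have hEN : Eᶜ ⊆ N := subset_toMeasurable μ _
  set E₁ := Nᶜ ∩ {x : EuclideanSpace ℝ (Fin d) | x k ≤ t'} with hE₁_def
  set E₂ := Nᶜ ∩ {x : EuclideanSpace ℝ (Fin d) | t' + δ/3 ≤ x k} with hE₂_def
  have hE₁sub : E₁ ⊆ E := fun x hx => by
    have := hx.1
    by_contra hxE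
    exact this (hEN hxE)
  have hE₂sub : E₂ ⊆ E := fun x hx => by
    have := hx.1
    by_contra hxE
    exact this (hEN hxE)
  -- measure of E₁
  have hμE₁ : third ≤ μ E₁ := by
    have hsub : {x : EuclideanSpace ℝ (Fin d) | x k ≤ t'} ⊆ E₁ ∪ N := by
      intro x hx
      by_cases hxN : x ∈ N
      · exact Or.inr hxN
      · exact Or.inl ⟨hxN, hx⟩
    calc third ≤ μ {x : EuclideanSpace ℝ (Fin d) | x k ≤ t'} := ht'T
      _ ≤ μ (E₁ ∪ N) := measure_mono hsub
      _ ≤ μ E₁ + μ N := measure_union_le _ _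
      _ = μ E₁ := by rw [hNnull, add_zero]
  -- measure of E₂
  have hμE₂ : third ≤ μ E₂ := by
    have hhalf : μ {x : EuclideanSpace ℝ (Fin d) | x k ≤ t' + δ/3} ≤ ENNReal.ofReal (1/2) := by
      have hsub : {x : EuclideanSpace ℝ (Fin d) | x k ≤ t' + δ/3} ⊆
          N ∪ ({x : EuclideanSpace ℝ (Fin d) | x k < t₀} ∪ (E ∩ {x | t₀ ≤ x k ∧ x k ≤ t₀ + δ})) := by
        intro x hx
        simp only [Set.mem_setOf_eq] at hx
        by_cases hxN : x ∈ N
        · exact Or.inl hxN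
        · have hxE : x ∈ E := by by_contra h; exact hxN (hEN h)
          by_cases hxt : x k < t₀
          · exact Or.inr (Or.inl hxt)
          · push_neg at hxt
            refine Or.inr (Or.inr ⟨hxE, hxt, ?_⟩)
            simp only [Set.mem_setOf_eq]
            linarith
      calc μ {x : EuclideanSpace ℝ (Fin d) | x k ≤ t' + δ/3}
          ≤ μ (N ∪ ({x : EuclideanSpace ℝ (Fin d) | x k < t₀} ∪ (E ∩ {x | t₀ ≤ x k ∧ x k ≤ t₀ + δ}))) :=
            measure_mono hsub
        _ ≤ μ N + (μ {x : EuclideanSpace ℝ (Fin d) | x k < t₀} + μ (E ∩ {x | t₀ ≤ x k ∧ x k ≤ t₀ + δ})) := by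
            refine le_trans (measure_union_le _ _) ?_
            exact add_le_add le_rfl (measure_union_le _ _)
        _ ≤ 0 + (third + ENNReal.ofReal (1/6)) := by
            refine add_le_add hNnull.le (add_le_add hlt hslab)
        _ = ENNReal.ofReal (1/2) := by
            rw [zero_add, hthird_def, ← ENNReal.ofReal_add (by norm_num) (by norm_num)]
            norm_num
    have hsub2 : Set.univ ⊆ {x : EuclideanSpace ℝ (Fin d) | x k ≤ t' + δ/3} ∪ E₂ ∪ N := by
      intro x _
      by_cases hxN : x ∈ N
      · exact Or.inr hxN
      · by_cases hxle : x k ≤ t' + δ/3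
        · exact Or.inl (Or.inl hxle)
        · push_neg at hxle
          exact Or.inl (Or.inr ⟨hxN, hxle.le⟩)
    have h1 : (1:ℝ≥0∞) ≤ ENNReal.ofReal (1/2) + μ E₂ := by
      calc (1:ℝ≥0∞) = μ Set.univ := measure_univ.symm
        _ ≤ μ ({x : EuclideanSpace ℝ (Fin d) | x k ≤ t' + δ/3} ∪ E₂ ∪ N) := measure_mono hsub2
        _ ≤ μ ({x : EuclideanSpace ℝ (Fin d) | x k ≤ t' + δ/3} ∪ E₂) + μ N := measure_union_le _ _
        _ = μ ({x : EuclideanSpace ℝ (Fin d) | x k ≤ t' + δ/3} ∪ E₂) := by rw [hNnull, add_zero]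
        _ ≤ μ {x : EuclideanSpace ℝ (Fin d) | x k ≤ t' + δ/3} + μ E₂ := measure_union_le _ _
        _ ≤ ENNReal.ofReal (1/2) + μ E₂ := add_le_add hhalf le_rfl
    have h2 : ENNReal.ofReal (1/2) ≤ μ E₂ := by
      have hone : (1:ℝ≥0∞) = ENNReal.ofReal (1/2) + ENNReal.ofReal (1/2) := by
        rw [← ENNReal.ofReal_add (by norm_num) (by norm_num)]
        norm_num
      rw [hone] at h1
      exact (ENNReal.add_le_add_iff_left (by simp)).mp h1
    refine le_trans ?_ h2
    exact ENNReal.ofReal_le_ofReal (by norm_num)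
  refine ⟨1/3, δ/3, by norm_num, by positivity, E₁, E₂,
    (hNmeas.compl).inter (hmeas_le t'), (hNmeas.compl).inter (hmeas_ge (t' + δ/3)),
    hE₁sub, hE₂sub, hμE₁, hμE₂, k, ?_⟩
  intro x hx y hy
  have hx2 : x k ≤ t' := hx.2
  have hy2 : t' + δ/3 ≤ y k := hy.2
  calc δ/3 ≤ y k - x k := by linarith
    _ ≤ |y k - x k| := le_abs_self _
    _ = |x k - y k| := abs_sub_comm _ _
end

section
/- Let d ≥ 2, let f : ℝ^{d−1} → ℝ be a Lipschitz function, and let E = {(t, f(t)) : t ∈ [0,1]^{d−1}} ⊆ ℝ^d be the graph of f over the unit cube. If E is not contained in any affine hyperplane of ℝ^d, then the direction set 𝒟(E) has positive (d−1)-dimensional Hausdorff measure on S^{d−1}. -/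
open MeasureTheory Metric

/-- The set of directions determined by a set `A ⊆ ℝ^d`. -/
def directionSet {d : ℕ} (A : Set (EuclideanSpace ℝ (Fin d))) :
    Set (EuclideanSpace ℝ (Fin d)) :=
  {ω | ∃ x ∈ A, ∃ y ∈ A, x ≠ y ∧ ω = ‖x - y‖⁻¹ • (x - y)}

/-- Append a last coordinate to a vector of `ℝ^m`, producing a vector of `ℝ^{m+1}`. -/
noncomputable def snocE {m : ℕ} (t : EuclideanSpace ℝ (Fin m)) (a : ℝ) :
    EuclideanSpace ℝ (Fin (m + 1)) :=
  (WithLp.equiv 2 (Fin (m + 1) → ℝ)).symm (Fin.snoc ((WithLp.equiv 2 (Fin m → ℝ)) t) a)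


lemma coord_le_norm {n : ℕ} (x : EuclideanSpace ℝ (Fin n)) (i : Fin n) :
    |x i| ≤ ‖x‖ := by
  rw [EuclideanSpace.norm_eq, ← Real.sqrt_sq_eq_abs]
  apply Real.sqrt_le_sqrt
  calc x i ^ 2 = ‖x i‖ ^ 2 := by rw [Real.norm_eq_abs, sq_abs]
    _ ≤ _ := Finset.single_le_sum (fun j _ => sq_nonneg ‖x j‖) (Finset.mem_univ i)

lemma snocE_castSucc {m : ℕ} (t : EuclideanSpace ℝ (Fin m)) (a : ℝ) (i : Fin m) :
    snocE t a i.castSucc = t i := by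
  simp [snocE, WithLp.equiv_symm_apply, Fin.snoc_castSucc]

lemma snocE_last {m : ℕ} (t : EuclideanSpace ℝ (Fin m)) (a : ℝ) :
    snocE t a (Fin.last m) = a := by
  simp [snocE, WithLp.equiv_symm_apply]

lemma snocE_sub {m : ℕ} (t s : EuclideanSpace ℝ (Fin m)) (a b : ℝ) :
    snocE t a - snocE s b = snocE (t - s) (a - b) := by
  ext i
  refine Fin.lastCases ?_ (fun j => ?_) i
  · simp [PiLp.sub_apply, snocE_last]
  · simp [PiLp.sub_apply, snocE_castSucc]

lemma norm_snocE {m : ℕ} (t : EuclideanSpace ℝ (Fin m)) (a : ℝ) :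
    ‖snocE t a‖ = Real.sqrt (‖t‖ ^ 2 + a ^ 2) := by
  rw [EuclideanSpace.norm_eq]
  congr 1
  rw [Fin.sum_univ_castSucc]
  simp only [snocE_castSucc, snocE_last]
  rw [EuclideanSpace.norm_eq, Real.sq_sqrt (by positivity)]
  simp [Real.norm_eq_abs, sq_abs]

noncomputable def gmapE {m : ℕ} (x : EuclideanSpace ℝ (Fin (m + 1))) :
    EuclideanSpace ℝ (Fin m) :=
  (WithLp.equiv 2 (Fin m → ℝ)).symm (fun i => x i.castSucc)

lemma gmapE_apply {m : ℕ} (x : EuclideanSpace ℝ (Fin (m + 1))) (i : Fin m) :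
    gmapE x i = x i.castSucc := rfl

lemma gmapE_snocE {m : ℕ} (t : EuclideanSpace ℝ (Fin m)) (a : ℝ) :
    gmapE (snocE t a) = t := by
  ext i; rw [gmapE_apply, snocE_castSucc]

lemma gmapE_sub {m : ℕ} (x y : EuclideanSpace ℝ (Fin (m + 1))) :
    gmapE (x - y) = gmapE x - gmapE y := by
  ext i; simp [gmapE_apply, PiLp.sub_apply]

lemma gmapE_smul {m : ℕ} (r : ℝ) (x : EuclideanSpace ℝ (Fin (m + 1))) :
    gmapE (r • x) = r • gmapE x := by
  ext i; simp [gmapE_apply, PiLp.smul_apply]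

lemma norm_gmapE_le {m : ℕ} (x : EuclideanSpace ℝ (Fin (m + 1))) :
    ‖gmapE x‖ ≤ ‖x‖ := by
  rw [EuclideanSpace.norm_eq, EuclideanSpace.norm_eq]
  apply Real.sqrt_le_sqrt
  rw [Fin.sum_univ_castSucc (f := fun i => ‖x i‖ ^ 2)]
  have : ∑ i : Fin m, ‖gmapE x i‖ ^ 2 = ∑ i : Fin m, ‖x i.castSucc‖ ^ 2 := by
    simp [gmapE_apply]
  rw [this]
  nlinarith [sq_nonneg ‖x (Fin.last m)‖]

lemma lipschitz_gmapE {m : ℕ} : LipschitzWith 1 (gmapE (m := m)) := by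
  apply LipschitzWith.of_dist_le_mul
  intro x y
  rw [dist_eq_norm, dist_eq_norm, ← gmapE_sub, NNReal.coe_one, one_mul]
  exact norm_gmapE_le _

lemma hausdorff_pos_of_isOpen {m : ℕ} {U : Set (EuclideanSpace ℝ (Fin m))}
    (hU : IsOpen U) (hne : U.Nonempty) : 0 < μH[(m : ℝ)] U := by
  set φ := PiLp.continuousLinearEquiv 2 ℝ (fun _ : Fin m => ℝ)
  have hlip : LipschitzWith 1 (φ : EuclideanSpace ℝ (Fin m) → (Fin m → ℝ)) := by
    apply LipschitzWith.of_dist_le_mul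
    intro x y
    rw [NNReal.coe_one, one_mul]
    rw [dist_pi_le_iff dist_nonneg]
    intro i
    rw [Real.dist_eq]
    have : (φ x i - φ y i) = (x - y) i := by simp [φ, PiLp.sub_apply]
    calc |φ x i - φ y i| = |(x - y) i| := by rw [this]
      _ ≤ ‖x - y‖ := coord_le_norm _ _
      _ = dist x y := (dist_eq_norm x y).symm
  have hpi : (μH[(m : ℝ)] : Measure (Fin m → ℝ)) = volume := by
    have := hausdorffMeasure_pi_real (ι := Fin m)
    simpa using this
  have hvol : 0 < volume (φ '' U) := by
    exact (φ.toHomeomorph.isOpen_image.2 hU).measure_pos volume (hne.image _)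
  have h2 : μH[(m : ℝ)] (φ '' U) ≤ 1 ^ (m : ℝ) * μH[(m : ℝ)] U :=
    hlip.hausdorffMeasure_image_le (by positivity) U
  rw [hpi] at h2
  simpa using lt_of_lt_of_le hvol h2

def inCube {m : ℕ} (t : EuclideanSpace ℝ (Fin m)) : Prop := ∀ i, t i ∈ Set.Icc (0:ℝ) 1



lemma step1 {m : ℕ} (f : EuclideanSpace ℝ (Fin m) → ℝ)
    (key : ∀ t1 s1 t2 s2 : EuclideanSpace ℝ (Fin m), inCube t1 → inCube s1 → inCube t2 →
      inCube s2 → ∀ lam : ℝ, 0 < lam → t2 - s2 = lam • (t1 - s1) → t1 ≠ s1 →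
        f t2 - f s2 = lam * (f t1 - f s1)) :
    ∀ v, inCube v → f v = f 0 + ∑ i, v i * (f (EuclideanSpace.single i 1) - f 0) := by
  have htrans : ∀ t s w : EuclideanSpace ℝ (Fin m), inCube t → inCube s → inCube (t + w) →
      inCube (s + w) → f (t + w) - f (s + w) = f t - f s := by
    intro t s w ht hs htw hsw
    by_cases hts : t = s
    · rw [hts]; ring
    · have := key t s (t + w) (s + w) ht hs htw hsw 1 one_pos (by module) hts
      rw [this, one_mul]
  have hzero : inCube (0 : EuclideanSpace ℝ (Fin m)) := by
    intro i; simp [Set.mem_Icc]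
  have hhom : ∀ (v : EuclideanSpace ℝ (Fin m)) (lam : ℝ), inCube v → inCube (lam • v) →
      0 < lam → f (lam • v) - f 0 = lam * (f v - f 0) := by
    intro v lam hv hlv hlam
    by_cases hv0 : v = 0
    · subst hv0; simp
    · exact key v 0 (lam • v) 0 hv hzero hlv hzero lam hlam (by module) hv0
  set c : Fin m → ℝ := fun i => f (EuclideanSpace.single i 1) - f 0 with hc
  have claim : ∀ S : Finset (Fin m), ∀ v : EuclideanSpace ℝ (Fin m), inCube v →
      (∀ i ∉ S, v i = 0) → f v = f 0 + ∑ i ∈ S, v i * c i := by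
    intro S
    induction S using Finset.induction_on with
    | empty =>
      intro v hv hsupp
      have : v = 0 := by
        ext i; exact hsupp i (Finset.notMem_empty i)
      simp [this]
    | @insert j S hj ih =>
      intro v hv hsupp
      set ej : EuclideanSpace ℝ (Fin m) := EuclideanSpace.single j 1 with hej
      have hej_apply : ∀ i, ej i = if i = j then 1 else 0 := by
        intro i; rw [hej, EuclideanSpace.single_apply]
      set v' : EuclideanSpace ℝ (Fin m) := v - v j • ej with hv'
      have hv'_apply : ∀ i, v' i = if i = j then 0 else v i := by
        intro i
        rw [hv', PiLp.sub_apply, PiLp.smul_apply, hej_apply]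
        by_cases h : i = j
        · subst h; simp [smul_eq_mul]
        · simp [h, smul_eq_mul]
      have hv'cube : inCube v' := by
        intro i; rw [hv'_apply]
        by_cases h : i = j <;> simp only [h, if_true, if_false, if_neg]
        · simp [Set.mem_Icc]
        · simpa using hv i
      have hv'supp : ∀ i ∉ S, v' i = 0 := by
        intro i hi
        rw [hv'_apply]
        by_cases h : i = j
        · simp [h]
        · rw [if_neg h]
          exact hsupp i (by simp [h, hi])
      have hcube_t : inCube (v j • ej) := by
        intro i
        rw [PiLp.smul_apply, hej_apply]
        by_cases h : i = j <;> simp [h, smul_eq_mul]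
        · exact hv j
      have hsum : v j • ej + v' = v := by rw [hv']; abel
      have h1 : f (v j • ej + v') - f (0 + v') = f (v j • ej) - f 0 := by
        apply htrans _ _ _ hcube_t hzero
        · rw [hsum]; exact hv
        · rw [zero_add]; exact hv'cube
      rw [hsum, zero_add] at h1
      have hcube_ej : inCube ej := by
        intro i; rw [hej_apply]
        by_cases h : i = j <;> simp [h]
      have h2 : f (v j • ej) - f 0 = v j * c j := by
        rcases lt_or_eq_of_le (hv j).1 with h | h
        · rw [hhom ej (v j) hcube_ej hcube_t h, hc]
        · rw [← h]; simp
      have h3 : f v' = f 0 + ∑ i ∈ S, v' i * c i := ih v' hv'cube hv'supp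
      have h4 : ∑ i ∈ S, v' i * c i = ∑ i ∈ S, v i * c i := by
        apply Finset.sum_congr rfl
        intro i hi
        rw [hv'_apply, if_neg (fun h => hj (by rwa [h] at hi))]
      have : f v = f v' + v j * c j := by linarith
      rw [this, h3, h4, Finset.sum_insert hj]
      ring
  intro v hv
  have := claim Finset.univ v hv (fun i hi => absurd (Finset.mem_univ i) hi)
  simpa using this

noncomputable def lastFunctional {m : ℕ} (c : Fin m → ℝ) :
    EuclideanSpace ℝ (Fin (m + 1)) →ₗ[ℝ] ℝ where
  toFun x := x (Fin.last m) - ∑ i, c i * x i.castSucc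
  map_add' x y := by
    simp only [PiLp.add_apply, mul_add, Finset.sum_add_distrib]; ring
  map_smul' r x := by
    simp only [PiLp.smul_apply, smul_eq_mul, RingHom.id_apply]
    rw [mul_sub, Finset.mul_sum]
    congr 1
    exact Finset.sum_congr rfl (fun i _ => by ring)

lemma hyperplane_of_affine {m : ℕ} (f : EuclideanSpace ℝ (Fin m) → ℝ) (c : Fin m → ℝ)
    (haff : ∀ v, inCube v → f v = f 0 + ∑ i, v i * c i)
    (E : Set (EuclideanSpace ℝ (Fin (m + 1))))
    (hE : E = {x : EuclideanSpace ℝ (Fin (m + 1)) |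
      ∃ t : EuclideanSpace ℝ (Fin m), (∀ i, t i ∈ Set.Icc (0 : ℝ) 1) ∧ x = snocE t (f t)}) :
    ∃ (v : EuclideanSpace ℝ (Fin (m + 1)))
      (W : Submodule ℝ (EuclideanSpace ℝ (Fin (m + 1)))),
      Module.finrank ℝ W = m ∧
        E ⊆ (fun w => v + w) '' (W : Set (EuclideanSpace ℝ (Fin (m + 1)))) := by
  set φ := lastFunctional c with hφ
  have hφ_snocE : ∀ (t : EuclideanSpace ℝ (Fin m)) (a : ℝ),
      φ (snocE t a) = a - ∑ i, c i * t i := by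
    intro t a
    show snocE t a (Fin.last m) - ∑ i, c i * snocE t a i.castSucc = _
    simp [snocE_last, snocE_castSucc]
  refine ⟨snocE 0 (f 0), LinearMap.ker φ, ?_, ?_⟩
  · have hsurj : Function.Surjective φ := by
      intro a
      exact ⟨snocE 0 (a + f 0 * 0), by simp [hφ_snocE]⟩
    have hrank := LinearMap.finrank_range_add_finrank_ker φ
    rw [LinearMap.range_eq_top.2 hsurj] at hrank
    simp only [finrank_top, finrank_euclideanSpace_fin] at hrank
    have h1 : Module.finrank ℝ ℝ = 1 := Module.finrank_self ℝ
    omega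
  · rintro x hx
    rw [hE] at hx
    obtain ⟨t, ht, rfl⟩ := hx
    refine ⟨snocE t (f t) - snocE 0 (f 0), ?_, by module⟩
    rw [SetLike.mem_coe, LinearMap.mem_ker, map_sub, hφ_snocE, hφ_snocE]
    have := haff t ht
    simp only [PiLp.zero_apply, mul_zero, Finset.sum_const_zero, sub_zero]
    rw [this]
    have : ∑ i, t i * c i = ∑ i, c i * t i := by
      apply Finset.sum_congr rfl; intros; ring
    rw [this]; ring

noncomputable def psiR (σ : ℝ) : ℝ := (Real.sqrt (1 + σ ^ 2))⁻¹

lemma psiR_pos (σ : ℝ) : 0 < psiR σ := inv_pos.2 (Real.sqrt_pos.2 (by positivity))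

lemma psiR_anti {x y : ℝ} (hx : 0 ≤ x) (hxy : x < y) : psiR y < psiR x := by
  have h1 : Real.sqrt (1 + x ^ 2) < Real.sqrt (1 + y ^ 2) :=
    Real.sqrt_lt_sqrt (by positivity) (by nlinarith)
  exact inv_strictAnti₀ (Real.sqrt_pos.2 (by positivity)) h1

lemma psiR_mono {x y : ℝ} (hy : y ≤ 0) (hxy : x < y) : psiR x < psiR y := by
  have h1 : Real.sqrt (1 + y ^ 2) < Real.sqrt (1 + x ^ 2) :=
    Real.sqrt_lt_sqrt (by positivity) (by nlinarith)
  exact inv_strictAnti₀ (Real.sqrt_pos.2 (by positivity)) h1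

lemma psiR_cont : Continuous psiR := by
  apply Continuous.inv₀
  · exact Real.continuous_sqrt.comp (by continuity)
  · intro x
    exact ne_of_gt (Real.sqrt_pos.2 (by positivity))


lemma convexOmega {m : ℕ} (e : EuclideanSpace ℝ (Fin m)) (lmin : ℝ) :
    Convex ℝ {z : EuclideanSpace ℝ (Fin m) × ℝ |
      inCube z.1 ∧ inCube (z.1 - z.2 • e) ∧ lmin ≤ z.2} := by
  rintro z hz w hw a b ha hb hab
  refine ⟨?_, ?_, ?_⟩
  · intro i
    have h1 := hz.1 i
    have h2 := hw.1 i
    have h3 : (a • z + b • w).1 i = a * z.1 i + b * w.1 i := by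
      simp [Prod.smul_fst, Prod.fst_add, PiLp.add_apply, PiLp.smul_apply, smul_eq_mul]
    rw [h3]
    simp only [Set.mem_Icc] at h1 h2 ⊢
    constructor <;> nlinarith [h1.1, h1.2, h2.1, h2.2]
  · intro i
    have h1 := hz.2.1 i
    have h2 := hw.2.1 i
    have h3 : ((a • z + b • w).1 - (a • z + b • w).2 • e) i
        = a * ((z.1 - z.2 • e) i) + b * ((w.1 - w.2 • e) i) := by
      simp only [Prod.smul_fst, Prod.fst_add, Prod.smul_snd, Prod.snd_add,
        PiLp.add_apply, PiLp.smul_apply, PiLp.sub_apply, smul_eq_mul]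
      ring
    rw [h3]
    simp only [Set.mem_Icc] at h1 h2 ⊢
    constructor <;> nlinarith [h1.1, h1.2, h2.1, h2.2]
  · have h1 := hz.2.2
    have h2 := hw.2.2
    show lmin ≤ (a • z + b • w).2
    have h3 : (a • z + b • w).2 = a * z.2 + b * w.2 := rfl
    rw [h3]
    calc lmin = a * lmin + b * lmin := by rw [← add_mul, hab, one_mul]
      _ ≤ a * z.2 + b * w.2 :=
          add_le_add (mul_le_mul_of_nonneg_left h1 ha) (mul_le_mul_of_nonneg_left h2 hb)

lemma contSl {m : ℕ} (f : EuclideanSpace ℝ (Fin m) → ℝ) (hfc : Continuous f)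
    (e : EuclideanSpace ℝ (Fin m)) {lmin : ℝ} (hlmin : 0 < lmin) :
    ContinuousOn (fun z : EuclideanSpace ℝ (Fin m) × ℝ => (f z.1 - f (z.1 - z.2 • e))/z.2)
      {z : EuclideanSpace ℝ (Fin m) × ℝ |
        inCube z.1 ∧ inCube (z.1 - z.2 • e) ∧ lmin ≤ z.2} := by
  apply ContinuousOn.div
  · apply Continuous.continuousOn
    exact (hfc.comp continuous_fst).sub
      (hfc.comp (continuous_fst.sub (continuous_snd.smul continuous_const)))
  · exact continuous_snd.continuousOn
  · intro z hz
    exact (lt_of_lt_of_le hlmin hz.2.2).ne'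


set_option maxHeartbeats 2000000 in
lemma key {m : ℕ} (f : EuclideanSpace ℝ (Fin m) → ℝ) (L : NNReal) (hf : LipschitzWith L f)
    (E : Set (EuclideanSpace ℝ (Fin (m + 1))))
    (hE : E = {x : EuclideanSpace ℝ (Fin (m + 1)) |
      ∃ t : EuclideanSpace ℝ (Fin m), (∀ i, t i ∈ Set.Icc (0 : ℝ) 1) ∧ x = snocE t (f t)})
    (tA sA tB sB : EuclideanSpace ℝ (Fin m)) (htA : inCube tA) (hsA : inCube sA)
    (htB : inCube tB) (hsB : inCube sB) (lam : ℝ) (hlam : 0 < lam)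
    (hpar : tB - sB = lam • (tA - sA)) (hne : tA ≠ sA)
    (hslope : (f tA - f sA) / ‖tA - sA‖ < (f tB - f sB) / ‖tB - sB‖) :
    0 < μH[(m : ℝ)] (directionSet E) := by
  classical
  set u : EuclideanSpace ℝ (Fin m) := tA - sA with hu
  have hnu : 0 < ‖u‖ := by
    rw [norm_pos_iff]
    exact sub_ne_zero.2 hne
  set nu : ℝ := ‖u‖ with hnudef
  set e0 : EuclideanSpace ℝ (Fin m) := nu⁻¹ • u with he0def
  have he0 : ‖e0‖ = 1 := by
    rw [he0def, norm_smul, norm_inv, Real.norm_eq_abs, abs_of_pos hnu, inv_mul_cancel₀ hnu.ne']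
  set nuB : ℝ := lam * nu with hnuBdef
  have hnuB : 0 < nuB := mul_pos hlam hnu
  have hBnorm : ‖tB - sB‖ = nuB := by
    rw [hpar, norm_smul, Real.norm_eq_abs, abs_of_pos hlam]
  have hue0 : u = nu • e0 := by
    rw [he0def, smul_smul, mul_inv_cancel₀ hnu.ne', one_smul]
  set σA : ℝ := (f tA - f sA) / nu with hσA
  set σB : ℝ := (f tB - f sB) / nuB with hσB
  have hgap : 0 < σB - σA := by
    rw [hσA, hσB, ← hBnorm]
    simpa [hnudef, hu] using sub_pos.2 hslope
  set gap : ℝ := σB - σA with hgapdef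
  set ctr : EuclideanSpace ℝ (Fin m) :=
    (WithLp.equiv 2 (Fin m → ℝ)).symm (fun _ => (1:ℝ)/2) with hctr
  have hctr_apply : ∀ i, ctr i = 1/2 := fun i => rfl
  set TA : ℝ → EuclideanSpace ℝ (Fin m) := fun θ => tA + θ • (ctr - tA) with hTA
  set SA : ℝ → EuclideanSpace ℝ (Fin m) := fun θ => sA + θ • (ctr - sA) with hSA
  set TB : ℝ → EuclideanSpace ℝ (Fin m) := fun θ => tB + θ • (ctr - tB) with hTB
  set SB : ℝ → EuclideanSpace ℝ (Fin m) := fun θ => sB + θ • (ctr - sB) with hSB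
  set aθ : ℝ → ℝ := fun θ => (f (TA θ) - f (SA θ)) / ((1 - θ) * nu) with haθ
  set bθ : ℝ → ℝ := fun θ => (f (TB θ) - f (SB θ)) / ((1 - θ) * nuB) with hbθ
  have hfc : Continuous f := hf.continuous
  have hconta : ContinuousAt aθ 0 := by
    apply ContinuousAt.div
    · exact ((hfc.comp (by fun_prop)).sub (hfc.comp (by fun_prop))).continuousAt
    · fun_prop
    · simpa using hnu.ne'
  have hcontb : ContinuousAt bθ 0 := by
    apply ContinuousAt.div
    · exact ((hfc.comp (by fun_prop)).sub (hfc.comp (by fun_prop))).continuousAt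
    · fun_prop
    · simpa using hnuB.ne'
  have ha0 : aθ 0 = σA := by simp [haθ, hTA, hSA, hσA, hu]
  have hb0 : bθ 0 = σB := by simp [hbθ, hTB, hSB, hσB]
  have hev : ∀ᶠ θ in nhdsWithin (0:ℝ) (Set.Ioi 0),
      |aθ θ - σA| < gap/8 ∧ |bθ θ - σB| < gap/8 ∧ 0 < θ ∧ θ < 1 := by
    have h1 : ∀ᶠ θ in nhds (0:ℝ), |aθ θ - σA| < gap/8 := by
      have ht := hconta.tendsto
      rw [ha0] at ht
      have := ht.eventually (eventually_abs_sub_lt σA (show (0:ℝ) < gap/8 by positivity))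
      exact this
    have h2 : ∀ᶠ θ in nhds (0:ℝ), |bθ θ - σB| < gap/8 := by
      have ht := hcontb.tendsto
      rw [hb0] at ht
      exact ht.eventually (eventually_abs_sub_lt σB (show (0:ℝ) < gap/8 by positivity))
    have h3 : ∀ᶠ θ in nhdsWithin (0:ℝ) (Set.Ioi 0), 0 < θ ∧ θ < 1 := by
      have : Set.Ioo (0:ℝ) 1 ∈ nhdsWithin (0:ℝ) (Set.Ioi 0) :=
        Ioo_mem_nhdsGT_of_mem ⟨le_refl 0, one_pos⟩
      filter_upwards [this] with θ hθ
      exact ⟨hθ.1, hθ.2⟩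
    filter_upwards [nhdsWithin_le_nhds h1, nhdsWithin_le_nhds h2, h3] with θ p1 p2 p3
    exact ⟨p1, p2, p3⟩
  obtain ⟨θ, hθa, hθb, hθ0, hθ1⟩ := hev.exists
  set tA' := TA θ with htA'
  set sA' := SA θ with hsA'
  set tB' := TB θ with htB'
  set sB' := SB θ with hsB'
  set l1 : ℝ := (1 - θ) * nu with hl1def
  set l2 : ℝ := (1 - θ) * nuB with hl2def
  have h1θ : 0 < 1 - θ := by linarith
  have hl1 : 0 < l1 := mul_pos h1θ hnu
  have hl2 : 0 < l2 := mul_pos h1θ hnuB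
  set α : ℝ := aθ θ with hα
  set β : ℝ := bθ θ with hβ
  have hαval : α = (f tA' - f sA') / l1 := rfl
  have hβval : β = (f tB' - f sB') / l2 := rfl
  have hGap : gap / 2 < β - α := by
    have h1 := abs_lt.1 hθa
    have h2 := abs_lt.1 hθb
    linarith [h1.1, h1.2, h2.1, h2.2, hgapdef]
  have hRA : tA' - sA' = l1 • e0 := by
    have h1 : tA' - sA' = (1 - θ) • u := by
      show (tA + θ • (ctr - tA)) - (sA + θ • (ctr - sA)) = (1 - θ) • u
      rw [hu]
      module
    rw [h1, hue0, smul_smul, hl1def]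
  have hRB : tB' - sB' = l2 • e0 := by
    have h1 : tB' - sB' = (1 - θ) • (tB - sB) := by
      show (tB + θ • (ctr - tB)) - (sB + θ • (ctr - sB)) = (1 - θ) • (tB - sB)
      module
    rw [h1, hpar, hue0, smul_smul, smul_smul, hl2def, hnuBdef]
    ring_nf
  have hshrunk : ∀ (t : EuclideanSpace ℝ (Fin m)), inCube t →
      ∀ i, (t + θ • (ctr - t)) i ∈ Set.Icc (θ/2) (1 - θ/2) := by
    intro t ht i
    have h1 : (t + θ • (ctr - t)) i = t i + θ * (1/2 - t i) := by
      simp [PiLp.add_apply, PiLp.smul_apply, PiLp.sub_apply, hctr_apply, smul_eq_mul]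
    rw [h1]
    have h2 := ht i
    simp only [Set.mem_Icc] at h2 ⊢
    constructor <;> nlinarith [h2.1, h2.2]
  have hmargin : ∀ (p q : EuclideanSpace ℝ (Fin m)),
      (∀ i, p i ∈ Set.Icc (θ/2) (1 - θ/2)) → ‖q - p‖ ≤ θ/2 → inCube q := by
    intro p q hp hq i
    have h1 : |q i - p i| ≤ θ/2 := by
      calc |q i - p i| = |(q - p) i| := by rw [PiLp.sub_apply]
        _ ≤ ‖q - p‖ := coord_le_norm _ _
        _ ≤ θ/2 := hq
    have h2 := hp i
    simp only [Set.mem_Icc] at h2 ⊢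
    have h3 := abs_le.1 h1
    constructor <;> linarith [h3.1, h3.2, h2.1, h2.2]
  have htA'shr := hshrunk tA htA
  have hsA'shr := hshrunk sA hsA
  have htB'shr := hshrunk tB htB
  have hsB'shr := hshrunk sB hsB
  have htA'cube : inCube tA' := hmargin tA' tA' htA'shr (by rw [sub_self, norm_zero]; positivity)
  have htB'cube : inCube tB' := hmargin tB' tB' htB'shr (by rw [sub_self, norm_zero]; positivity)
  set ε : ℝ := min (gap/(8*((L:ℝ)+1))) (θ/(2*(l1+l2)+2)) with hε
  have hεpos : 0 < ε := lt_min (by positivity) (div_pos hθ0 (by linarith))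
  have hεL : (L:ℝ) * ε ≤ gap/8 := by
    have h1 : ε ≤ gap/(8*((L:ℝ)+1)) := min_le_left _ _
    have hL0 : (0:ℝ) ≤ L := L.coe_nonneg
    calc (L:ℝ) * ε ≤ (L:ℝ) * (gap/(8*((L:ℝ)+1))) := mul_le_mul_of_nonneg_left h1 hL0
      _ ≤ gap/8 := by
          rw [← mul_div_assoc, div_le_div_iff₀ (by positivity) (by positivity)]
          nlinarith [hgap.le, L.coe_nonneg]
  have hεl1 : l1 * ε ≤ θ/2 := by
    have h1 : ε ≤ θ/(2*(l1+l2)+2) := min_le_right _ _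
    calc l1 * ε ≤ l1 * (θ/(2*(l1+l2)+2)) := mul_le_mul_of_nonneg_left h1 hl1.le
      _ ≤ θ/2 := by
          rw [← mul_div_assoc, div_le_div_iff₀ (by linarith) (by norm_num)]
          nlinarith [mul_nonneg hl2.le hθ0.le, hθ0.le]
  have hεl2 : l2 * ε ≤ θ/2 := by
    have h1 : ε ≤ θ/(2*(l1+l2)+2) := min_le_right _ _
    calc l2 * ε ≤ l2 * (θ/(2*(l1+l2)+2)) := mul_le_mul_of_nonneg_left h1 hl2.le
      _ ≤ θ/2 := by
          rw [← mul_div_assoc, div_le_div_iff₀ (by linarith) (by norm_num)]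
          nlinarith [mul_nonneg hl1.le hθ0.le, hθ0.le]
  set A : ℝ := α + (β - α)/4 with hA
  set B : ℝ := β - (β - α)/4 with hB
  have hAB : A < B := by
    rw [hA, hB]; linarith
  have hslope1 : ∀ e : EuclideanSpace ℝ (Fin m), ‖e - e0‖ < ε →
      (f tA' - f (tA' - l1 • e)) / l1 ≤ A := by
    intro e he
    have hkey : sA' - (tA' - l1 • e) = l1 • (e - e0) := by
      rw [smul_sub, ← hRA]; abel
    have hdist : ‖sA' - (tA' - l1 • e)‖ = l1 * ‖e - e0‖ := by
      rw [hkey, norm_smul, Real.norm_eq_abs, abs_of_pos hl1]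
    have hfd : |f sA' - f (tA' - l1 • e)| ≤ (L:ℝ) * (l1 * ‖e - e0‖) := by
      rw [← hdist]
      have h := hf.dist_le_mul sA' (tA' - l1 • e)
      rwa [Real.dist_eq, dist_eq_norm] at h
    have h2 : |(f tA' - f (tA' - l1 • e))/l1 - α| ≤ (L:ℝ) * ‖e - e0‖ := by
      rw [hαval, div_sub_div_same, abs_div, abs_of_pos hl1, div_le_iff₀ hl1]
      have h3 : f tA' - f (tA' - l1 • e) - (f tA' - f sA') = f sA' - f (tA' - l1 • e) := by ring
      rw [h3]
      calc |f sA' - f (tA' - l1 • e)| ≤ (L:ℝ) * (l1 * ‖e - e0‖) := hfd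
        _ = (L:ℝ) * ‖e - e0‖ * l1 := by ring
    have h4 : (L:ℝ) * ‖e - e0‖ ≤ gap/8 :=
      le_trans (mul_le_mul_of_nonneg_left he.le L.coe_nonneg) hεL
    have h5 := (abs_le.1 h2).2
    rw [hA]
    have h6 : gap/8 < (β - α)/4 := by linarith
    linarith
  have hslope2 : ∀ e : EuclideanSpace ℝ (Fin m), ‖e - e0‖ < ε →
      B ≤ (f tB' - f (tB' - l2 • e)) / l2 := by
    intro e he
    have hkey : sB' - (tB' - l2 • e) = l2 • (e - e0) := by
      rw [smul_sub, ← hRB]; abel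
    have hdist : ‖sB' - (tB' - l2 • e)‖ = l2 * ‖e - e0‖ := by
      rw [hkey, norm_smul, Real.norm_eq_abs, abs_of_pos hl2]
    have hfd : |f sB' - f (tB' - l2 • e)| ≤ (L:ℝ) * (l2 * ‖e - e0‖) := by
      rw [← hdist]
      have h := hf.dist_le_mul sB' (tB' - l2 • e)
      rwa [Real.dist_eq, dist_eq_norm] at h
    have h2 : |(f tB' - f (tB' - l2 • e))/l2 - β| ≤ (L:ℝ) * ‖e - e0‖ := by
      rw [hβval, div_sub_div_same, abs_div, abs_of_pos hl2, div_le_iff₀ hl2]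
      have h3 : f tB' - f (tB' - l2 • e) - (f tB' - f sB') = f sB' - f (tB' - l2 • e) := by ring
      rw [h3]
      calc |f sB' - f (tB' - l2 • e)| ≤ (L:ℝ) * (l2 * ‖e - e0‖) := hfd
        _ = (L:ℝ) * ‖e - e0‖ * l2 := by ring
    have h4 : (L:ℝ) * ‖e - e0‖ ≤ gap/8 :=
      le_trans (mul_le_mul_of_nonneg_left he.le L.coe_nonneg) hεL
    have h5 := (abs_le.1 h2).1
    rw [hB]
    have h6 : gap/8 < (β - α)/4 := by linarith
    linarith
  have hqA : ∀ e : EuclideanSpace ℝ (Fin m), ‖e - e0‖ < ε → inCube (tA' - l1 • e) := by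
    intro e he
    apply hmargin sA' _ hsA'shr
    have h1 : tA' - l1 • e - sA' = l1 • (e0 - e) := by
      rw [smul_sub, ← hRA]; abel
    rw [h1, norm_smul, Real.norm_eq_abs, abs_of_pos hl1, norm_sub_rev]
    calc l1 * ‖e - e0‖ ≤ l1 * ε := mul_le_mul_of_nonneg_left he.le hl1.le
      _ ≤ θ/2 := hεl1
  have hqB : ∀ e : EuclideanSpace ℝ (Fin m), ‖e - e0‖ < ε → inCube (tB' - l2 • e) := by
    intro e he
    apply hmargin sB' _ hsB'shr
    have h1 : tB' - l2 • e - sB' = l2 • (e0 - e) := by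
      rw [smul_sub, ← hRB]; abel
    rw [h1, norm_smul, Real.norm_eq_abs, abs_of_pos hl2, norm_sub_rev]
    calc l2 * ‖e - e0‖ ≤ l2 * ε := mul_le_mul_of_nonneg_left he.le hl2.le
      _ ≤ θ/2 := hεl2
  obtain ⟨A1, B1, hA1, hB1, cr, dr, hcrdr, hcr0, hsurj⟩ :
      ∃ A1 B1 : ℝ, A ≤ A1 ∧ B1 ≤ B ∧ ∃ cr dr : ℝ, cr < dr ∧ 0 < cr ∧
        ∀ r ∈ Set.Icc cr dr, ∃ σ ∈ Set.Icc A1 B1, psiR σ = r := by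
    by_cases h0 : 0 < B
    · have hm : max A 0 < B := max_lt hAB h0
      refine ⟨max A 0, B, le_max_left _ _, le_refl B, psiR B, psiR (max A 0),
        psiR_anti (le_max_right _ _) hm, psiR_pos _, ?_⟩
      intro r hr
      obtain ⟨σ, hσ, hσr⟩ := intermediate_value_Icc' hm.le psiR_cont.continuousOn hr
      exact ⟨σ, hσ, hσr⟩
    · push_neg at h0
      refine ⟨A, B, le_refl A, le_refl B, psiR A, psiR B,
        psiR_mono h0 hAB, psiR_pos _, ?_⟩
      intro r hr
      obtain ⟨σ, hσ, hσr⟩ := intermediate_value_Icc hAB.le psiR_cont.continuousOn hr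
      exact ⟨σ, hσ, hσr⟩
  set U : Set (EuclideanSpace ℝ (Fin m)) :=
    {x | cr < ‖x‖ ∧ ‖x‖ < dr ∧ ‖x - ‖x‖ • e0‖ < ε * ‖x‖} with hU
  have hUopen : IsOpen U := by
    rw [hU]
    have h1 : IsOpen {x : EuclideanSpace ℝ (Fin m) | cr < ‖x‖} :=
      isOpen_lt continuous_const continuous_norm
    have h2 : IsOpen {x : EuclideanSpace ℝ (Fin m) | ‖x‖ < dr} :=
      isOpen_lt continuous_norm continuous_const
    have h3 : IsOpen {x : EuclideanSpace ℝ (Fin m) | ‖x - ‖x‖ • e0‖ < ε * ‖x‖} := by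
      apply isOpen_lt
      · exact (continuous_id.sub (continuous_norm.smul continuous_const)).norm
      · exact continuous_const.mul continuous_norm
    rw [Set.setOf_and, Set.setOf_and]
    exact h1.inter (h2.inter h3)
  have hUne : U.Nonempty := by
    refine ⟨((cr+dr)/2) • e0, ?_⟩
    have hn : ‖((cr+dr)/2) • e0‖ = (cr+dr)/2 := by
      rw [norm_smul, Real.norm_eq_abs, he0, mul_one, abs_of_pos (by linarith)]
    refine ⟨by rw [hn]; linarith, by rw [hn]; linarith, ?_⟩
    rw [hn, show ((cr+dr)/2) • e0 - ((cr+dr)/2) • e0 = 0 by abel, norm_zero]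
    exact mul_pos hεpos (by linarith)
  have hUsub : U ⊆ gmapE '' (directionSet E) := by
    rintro x ⟨hx1, hx2, hx3⟩
    have hxnorm : 0 < ‖x‖ := lt_trans hcr0 hx1
    set e : EuclideanSpace ℝ (Fin m) := ‖x‖⁻¹ • x with he
    have heu : ‖e‖ = 1 := by
      rw [he, norm_smul, norm_inv, Real.norm_eq_abs, abs_of_pos hxnorm,
        inv_mul_cancel₀ hxnorm.ne']
    have hecap : ‖e - e0‖ < ε := by
      have h1 : e - e0 = ‖x‖⁻¹ • (x - ‖x‖ • e0) := by
        rw [smul_sub, he, smul_smul, inv_mul_cancel₀ hxnorm.ne', one_smul]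
      rw [h1, norm_smul, norm_inv, Real.norm_eq_abs, abs_of_pos hxnorm]
      calc ‖x‖⁻¹ * ‖x - ‖x‖ • e0‖ < ‖x‖⁻¹ * (ε * ‖x‖) :=
            mul_lt_mul_of_pos_left hx3 (inv_pos.2 hxnorm)
        _ = ε := by field_simp
    obtain ⟨σs, hσs_mem, hσs⟩ := hsurj ‖x‖ ⟨hx1.le, hx2.le⟩
    set lmin : ℝ := min l1 l2 with hlmin
    have hlminpos : 0 < lmin := lt_min hl1 hl2
    set Ω : Set (EuclideanSpace ℝ (Fin m) × ℝ) :=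
      {z | inCube z.1 ∧ inCube (z.1 - z.2 • e) ∧ lmin ≤ z.2} with hΩ
    have hconv : Convex ℝ Ω := convexOmega e lmin
    set sl : EuclideanSpace ℝ (Fin m) × ℝ → ℝ := fun z => (f z.1 - f (z.1 - z.2 • e))/z.2
      with hsl
    have hcont : ContinuousOn sl Ω := contSl f hfc e hlminpos
    have hz1 : ((tA', l1) : EuclideanSpace ℝ (Fin m) × ℝ) ∈ Ω :=
      ⟨htA'cube, hqA e hecap, min_le_left _ _⟩
    have hz2 : ((tB', l2) : EuclideanSpace ℝ (Fin m) × ℝ) ∈ Ω :=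
      ⟨htB'cube, hqB e hecap, min_le_right _ _⟩
    have hbetween : σs ∈ Set.Icc (sl (tA', l1)) (sl (tB', l2)) := by
      constructor
      · exact le_trans (hslope1 e hecap) (le_trans hA1 hσs_mem.1)
      · exact le_trans hσs_mem.2 (le_trans hB1 (hslope2 e hecap))
    obtain ⟨z, hzΩ, hzσ⟩ :=
      (hconv.isPreconnected).intermediate_value hz1 hz2 hcont hbetween
    have hμ : 0 < z.2 := lt_of_lt_of_le hlminpos hzΩ.2.2
    set p : EuclideanSpace ℝ (Fin m) := z.1 with hp
    set q : EuclideanSpace ℝ (Fin m) := z.1 - z.2 • e with hq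
    have hpq : p ≠ q := by
      intro h
      have h1 : z.2 • e = p - q := by rw [hq, hp]; abel
      rw [h, sub_self] at h1
      have h2 := congrArg norm h1
      rw [norm_smul, heu, norm_zero, Real.norm_eq_abs, abs_of_pos hμ, mul_one] at h2
      exact hμ.ne' h2
    have hfpq : f p - f q = σs * z.2 := by
      have h := hzσ
      rw [hsl] at h
      simp only at h
      rw [div_eq_iff hμ.ne'] at h
      exact h
    set xg := snocE p (f p) with hxg
    set yg := snocE q (f q) with hyg
    have hxgE : xg ∈ E := by rw [hE]; exact ⟨p, hzΩ.1, rfl⟩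
    have hygE : yg ∈ E := by rw [hE]; exact ⟨q, hzΩ.2.1, rfl⟩
    have hxyne : xg ≠ yg := by
      intro h
      apply hpq
      have h2 := congrArg gmapE h
      rwa [hxg, hyg, gmapE_snocE, gmapE_snocE] at h2
    refine ⟨‖xg - yg‖⁻¹ • (xg - yg), ⟨xg, hxgE, yg, hygE, hxyne, rfl⟩, ?_⟩
    have hpq2 : p - q = z.2 • e := by rw [hq, hp]; abel
    have hsub : xg - yg = snocE (z.2 • e) (σs * z.2) := by
      rw [hxg, hyg, snocE_sub, ← hfpq, hpq2]
    have hnormsub : ‖xg - yg‖ = z.2 * Real.sqrt (1 + σs^2) := by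
      rw [hsub, norm_snocE, norm_smul, Real.norm_eq_abs, abs_of_pos hμ, heu, mul_one,
        show z.2^2 + (σs*z.2)^2 = z.2^2 * (1 + σs^2) by ring,
        Real.sqrt_mul (sq_nonneg _), Real.sqrt_sq hμ.le]
    have hsq : (0:ℝ) < Real.sqrt (1 + σs^2) := Real.sqrt_pos.2 (by positivity)
    rw [gmapE_smul, hnormsub, hsub, gmapE_snocE, smul_smul]
    have hc : (z.2 * Real.sqrt (1 + σs^2))⁻¹ * z.2 = psiR σs := by
      unfold psiR
      rw [mul_inv, mul_comm (z.2⁻¹) _, mul_assoc, inv_mul_cancel₀ hμ.ne', mul_one]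
    rw [hc, hσs, he, smul_smul, mul_inv_cancel₀ hxnorm.ne', one_smul]
  have h1 : 0 < μH[(m:ℝ)] U := hausdorff_pos_of_isOpen hUopen hUne
  have h2 : μH[(m:ℝ)] U ≤ μH[(m:ℝ)] (gmapE '' directionSet E) := measure_mono hUsub
  have h3 := lipschitz_gmapE.hausdorffMeasure_image_le
    (show (0:ℝ) ≤ (m:ℝ) by positivity) (directionSet E)
  simp only [ENNReal.coe_one, ENNReal.one_rpow, one_mul] at h3
  exact lt_of_lt_of_le h1 (le_trans h2 h3)

theorem directions_of_lipschitz_graph (m : ℕ) (hm : 1 ≤ m)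
    (f : EuclideanSpace ℝ (Fin m) → ℝ) (L : NNReal) (hf : LipschitzWith L f)
    (E : Set (EuclideanSpace ℝ (Fin (m + 1))))
    (hE : E = {x : EuclideanSpace ℝ (Fin (m + 1)) |
      ∃ t : EuclideanSpace ℝ (Fin m), (∀ i, t i ∈ Set.Icc (0 : ℝ) 1) ∧ x = snocE t (f t)})
    (hplane : ¬ ∃ (v : EuclideanSpace ℝ (Fin (m + 1)))
      (W : Submodule ℝ (EuclideanSpace ℝ (Fin (m + 1)))),
      Module.finrank ℝ W = m ∧
        E ⊆ (fun w => v + w) '' (W : Set (EuclideanSpace ℝ (Fin (m + 1))))) :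
    0 < μH[(m : ℝ)] (directionSet E) := by
  by_cases hP : ∃ t1 s1 t2 s2 : EuclideanSpace ℝ (Fin m), inCube t1 ∧ inCube s1 ∧
      inCube t2 ∧ inCube s2 ∧ ∃ lam : ℝ, 0 < lam ∧ t2 - s2 = lam • (t1 - s1) ∧ t1 ≠ s1 ∧
      f t2 - f s2 ≠ lam * (f t1 - f s1)
  · obtain ⟨t1, s1, t2, s2, h1, h2, h3, h4, lam, hlam, hpar, hne, hsl⟩ := hP
    have hnu1 : 0 < ‖t1 - s1‖ := by
      rw [norm_pos_iff]; exact sub_ne_zero.2 hne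
    have hn2 : ‖t2 - s2‖ = lam * ‖t1 - s1‖ := by
      rw [hpar, norm_smul, Real.norm_eq_abs, abs_of_pos hlam]
    have hslne : (f t1 - f s1)/‖t1 - s1‖ ≠ (f t2 - f s2)/‖t2 - s2‖ := by
      intro h
      apply hsl
      rw [hn2, div_eq_div_iff hnu1.ne' (by positivity)] at h
      have h2 : (f t2 - f s2) * ‖t1 - s1‖ = (lam * (f t1 - f s1)) * ‖t1 - s1‖ := by
        linear_combination -h
      exact mul_right_cancel₀ hnu1.ne' h2
    rcases lt_or_gt_of_ne hslne with h | h
    · exact key f L hf E hE t1 s1 t2 s2 h1 h2 h3 h4 lam hlam hpar hne h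
    · have hne2 : t2 ≠ s2 := by
        intro hh
        apply hne
        have h0 : lam • (t1 - s1) = 0 := by rw [← hpar, hh, sub_self]
        rcases smul_eq_zero.1 h0 with h' | h'
        · exact absurd h' hlam.ne'
        · exact sub_eq_zero.1 h'
      have hpar2 : t1 - s1 = lam⁻¹ • (t2 - s2) := by
        rw [hpar, smul_smul, inv_mul_cancel₀ hlam.ne', one_smul]
      exact key f L hf E hE t2 s2 t1 s1 h3 h4 h1 h2 lam⁻¹ (inv_pos.2 hlam) hpar2 hne2 h
  · exfalso
    apply hplane
    have hkey : ∀ t1 s1 t2 s2 : EuclideanSpace ℝ (Fin m), inCube t1 → inCube s1 → inCube t2 →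
        inCube s2 → ∀ lam : ℝ, 0 < lam → t2 - s2 = lam • (t1 - s1) → t1 ≠ s1 →
        f t2 - f s2 = lam * (f t1 - f s1) := by
      intro t1 s1 t2 s2 h1 h2 h3 h4 lam hlam hpar hne
      by_contra hne2
      exact hP ⟨t1, s1, t2, s2, h1, h2, h3, h4, lam, hlam, hpar, hne, hne2⟩
    have haff := step1 f hkey
    exact hyperplane_of_affine f _ haff E hE
end

section
/- Let d ≥ 2, s > d−1, and K > 0. There exists a constant c > 0, depending only on d, s, and K, such that the following holds: if n ≥ 2 and P ⊆ [0,1]^d is a set of n points that is n^{−1/s}-separated and satisfies the discrete energy bound n^{−2} Σ_{p ≠ p' ∈ P} ‖p − p'‖^{−s} ≤ K, then the number of distinct directions satisfies #𝒟(P) ≥ c · n^{(d−1)/s}. -/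
open MeasureTheory Metric
open scoped Classical

section auxiliary_lemmas

open Finset

lemma oneD_energy {s L : ℝ} (hs : 1 < s) (hL : 0 < L) (T : Finset ℝ)
    (hT : ∀ t ∈ T, ∀ t' ∈ T, |t - t'| ≤ L) :
    ((T.card - 1 : ℕ) : ℝ) ^ (1 + s) ≤
      L ^ s * ∑ t ∈ T, ∑ t' ∈ T, (if t ≠ t' then |t - t'| ^ (-s) else 0) := by
  have hs0 : (0:ℝ) < s := lt_trans one_pos hs
  have h1s : (0:ℝ) < 1 + s := by linarith
  have hsum_nonneg : (0:ℝ) ≤ ∑ t ∈ T, ∑ t' ∈ T, (if t ≠ t' then |t - t'| ^ (-s) else 0) := by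
    refine Finset.sum_nonneg fun t _ => Finset.sum_nonneg fun t' _ => ?_
    split
    · positivity
    · exact le_refl 0
  rcases Nat.lt_or_ge T.card 2 with hc | hc
  · have h0 : T.card - 1 = 0 := by omega
    rw [h0]
    push_cast
    rw [Real.zero_rpow (ne_of_gt h1s)]
    positivity
  obtain ⟨m, hm⟩ : ∃ m, T.card = m + 1 := ⟨T.card - 1, by omega⟩
  have hm1 : 1 ≤ m := by omega
  set e := T.orderIsoOfFin hm with he
  set f' : ℕ → ℝ := fun j => ((e ⟨min j m, by omega⟩ : T) : ℝ) with hf'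
  have hfT : ∀ j, f' j ∈ T := fun j => (e ⟨min j m, by omega⟩).2
  have hfmono : ∀ j k : ℕ, j < k → k ≤ m → f' j < f' k := by
    intro j k hjk hkm
    have : (⟨min j m, by omega⟩ : Fin (m+1)) < ⟨min k m, by omega⟩ := by
      simp only [Fin.mk_lt_mk]
      omega
    exact Subtype.coe_lt_coe.2 (e.lt_iff_lt.2 this)
  set G : ℕ → ℝ := fun j => f' (j+1) - f' j with hG
  have hGpos : ∀ j ∈ Finset.range m, 0 < G j := by
    intro j hj
    rw [Finset.mem_range] at hj
    exact sub_pos.2 (hfmono j (j+1) (by omega) (by omega))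
  have hGsum : ∑ j ∈ Finset.range m, G j ≤ L := by
    rw [Finset.sum_range_sub f']
    calc f' m - f' 0 ≤ |f' m - f' 0| := le_abs_self _
      _ ≤ L := hT _ (hfT m) _ (hfT 0)
  have hGsum_nonneg : (0:ℝ) ≤ ∑ j ∈ Finset.range m, G j :=
    Finset.sum_nonneg fun j hj => le_of_lt (hGpos j hj)
  have hGs_nonneg : (0:ℝ) ≤ ∑ j ∈ Finset.range m, G j ^ (-s) :=
    Finset.sum_nonneg fun j hj => Real.rpow_nonneg (le_of_lt (hGpos j hj)) _
  -- Hölder on the gaps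
  set a : ℝ := s / (1 + s) with ha
  have hpq : Real.HolderConjugate ((1+s)/s) (1+s) := by
    refine Real.holderConjugate_iff.mpr ⟨?_, ?_⟩
    · rw [lt_div_iff₀ hs0]; linarith
    · rw [inv_div]
      field_simp
      ring
  have holder : (m:ℝ) ≤ (∑ j ∈ Finset.range m, G j) ^ a *
      (∑ j ∈ Finset.range m, G j ^ (-s)) ^ (1+s)⁻¹ := by
    have h1 : ∑ j ∈ Finset.range m, G j ^ a * G j ^ (-a) = (m:ℝ) := by
      rw [Finset.sum_congr rfl (fun j hj => show G j ^ a * G j ^ (-a) = 1 by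
        rw [← Real.rpow_add (hGpos j hj), add_neg_cancel, Real.rpow_zero])]
      simp
    have h2 := Real.inner_le_Lp_mul_Lq (Finset.range m) (fun j => G j ^ a)
      (fun j => G j ^ (-a)) hpq
    rw [h1] at h2
    have e1 : ∑ i ∈ Finset.range m, |G i ^ a| ^ ((1+s)/s) = ∑ j ∈ Finset.range m, G j := by
      refine Finset.sum_congr rfl fun j hj => ?_
      rw [abs_of_nonneg (Real.rpow_nonneg (le_of_lt (hGpos j hj)) _),
        ← Real.rpow_mul (le_of_lt (hGpos j hj))]
      rw [show a * ((1+s)/s) = 1 by rw [ha]; field_simp, Real.rpow_one]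
    have e2 : ∑ i ∈ Finset.range m, |G i ^ (-a)| ^ (1+s) = ∑ j ∈ Finset.range m, G j ^ (-s) := by
      refine Finset.sum_congr rfl fun j hj => ?_
      rw [abs_of_nonneg (Real.rpow_nonneg (le_of_lt (hGpos j hj)) _),
        ← Real.rpow_mul (le_of_lt (hGpos j hj))]
      rw [show -a * (1+s) = -s by rw [ha, neg_mul, div_mul_cancel₀ s (ne_of_gt h1s)]]
    rw [e1, e2] at h2
    have e3 : 1 / ((1+s)/s) = a := by rw [one_div_div]
    rw [e3, one_div] at h2
    exact h2
  -- raise to the power (1+s)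
  have hmain : (m:ℝ) ^ (1+s) ≤ L ^ s * ∑ j ∈ Finset.range m, G j ^ (-s) := by
    have h3 : (m:ℝ) ^ (1+s) ≤ ((∑ j ∈ Finset.range m, G j) ^ a *
        (∑ j ∈ Finset.range m, G j ^ (-s)) ^ (1+s)⁻¹) ^ (1+s) :=
      Real.rpow_le_rpow (Nat.cast_nonneg m) holder (le_of_lt h1s)
    rw [Real.mul_rpow (Real.rpow_nonneg hGsum_nonneg _) (Real.rpow_nonneg hGs_nonneg _),
      ← Real.rpow_mul hGsum_nonneg, ← Real.rpow_mul hGs_nonneg] at h3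
    rw [show a * (1+s) = s by rw [ha]; field_simp, show (1+s)⁻¹ * (1+s) = 1 by field_simp,
      Real.rpow_one] at h3
    calc (m:ℝ) ^ (1+s) ≤ (∑ j ∈ Finset.range m, G j) ^ s *
          (∑ j ∈ Finset.range m, G j ^ (-s)) := h3
      _ ≤ L ^ s * ∑ j ∈ Finset.range m, G j ^ (-s) := by
          apply mul_le_mul_of_nonneg_right _ hGs_nonneg
          exact Real.rpow_le_rpow hGsum_nonneg hGsum (le_of_lt hs0)
  -- the gap sum is at most the full off-diagonal double sum
  have hinj : ∑ j ∈ Finset.range m, G j ^ (-s) ≤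
      ∑ t ∈ T, ∑ t' ∈ T, (if t ≠ t' then |t - t'| ^ (-s) else 0) := by
    rw [← Finset.sum_product']
    set φ : ℕ → ℝ × ℝ := fun j => (f' j, f' (j+1)) with hφ
    have hφinj : Set.InjOn φ (Finset.range m) := by
      intro j hj k hk hjk
      rw [Finset.coe_range, Set.mem_Iio] at hj hk
      by_contra hne
      rcases Nat.lt_or_ge j k with h | h
      · exact absurd (congrArg Prod.fst hjk) (ne_of_lt (hfmono j k h (by omega)))
      · have : k < j := by omega
        exact absurd (congrArg Prod.fst hjk).symm (ne_of_lt (hfmono k j this (by omega)))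
    have himg : ∑ j ∈ Finset.range m, G j ^ (-s) =
        ∑ x ∈ (Finset.range m).image φ, (if x.1 ≠ x.2 then |x.1 - x.2| ^ (-s) else 0) := by
      rw [Finset.sum_image (fun x hx y hy h => hφinj hx hy h)]
      refine Finset.sum_congr rfl fun j hj => ?_
      have hpos := hGpos j hj
      have hlt : f' j < f' (j+1) := sub_pos.mp hpos
      rw [if_pos (by simpa [hφ] using ne_of_lt hlt)]
      simp only [hφ]
      rw [abs_sub_comm, abs_of_pos hpos]
    rw [himg]
    refine Finset.sum_le_sum_of_subset_of_nonneg ?_ ?_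
    · intro x hx
      rw [Finset.mem_image] at hx
      obtain ⟨j, hj, rfl⟩ := hx
      exact Finset.mem_product.2 ⟨hfT j, hfT (j+1)⟩
    · intro x _ _
      split
      · positivity
      · exact le_refl 0
  have hcast : ((T.card - 1 : ℕ) : ℝ) = (m : ℝ) := by rw [hm]; simp
  rw [hcast]
  calc (m:ℝ) ^ (1+s) ≤ L ^ s * ∑ j ∈ Finset.range m, G j ^ (-s) := hmain
    _ ≤ L ^ s * ∑ t ∈ T, ∑ t' ∈ T, (if t ≠ t' then |t - t'| ^ (-s) else 0) := by
        apply mul_le_mul_of_nonneg_left hinj (Real.rpow_nonneg (le_of_lt hL) s)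


lemma holder_interp {ι : Type*} (A : Finset ι) (f : ι → ℝ) (hf : ∀ i ∈ A, 0 ≤ f i)
    {s : ℝ} (hs : 1 < s) :
    ∑ i ∈ A, f i ^ (2:ℝ) ≤ (∑ i ∈ A, f i ^ (1+s)) ^ (1/s) * (∑ i ∈ A, f i) ^ ((s-1)/s) := by
  have hs0 : (0:ℝ) < s := lt_trans one_pos hs
  have hs1 : (0:ℝ) < s - 1 := by linarith
  have hpq : Real.HolderConjugate s (s/(s-1)) := by
    refine Real.holderConjugate_iff.mpr ⟨?_, ?_⟩
    · exact hs
    · rw [inv_div]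
      field_simp
      ring
  have h2 := Real.inner_le_Lp_mul_Lq A (fun i => f i ^ ((1+s)/s)) (fun i => f i ^ ((s-1)/s)) hpq
  have e0 : ∑ i ∈ A, f i ^ ((1+s)/s) * f i ^ ((s-1)/s) = ∑ i ∈ A, f i ^ (2:ℝ) := by
    refine Finset.sum_congr rfl fun i hi => ?_
    rw [← Real.rpow_add_of_nonneg (hf i hi) (by positivity) (by positivity)]
    congr 1
    field_simp
    ring
  have e1 : ∑ i ∈ A, |f i ^ ((1+s)/s)| ^ s = ∑ i ∈ A, f i ^ (1+s) := by
    refine Finset.sum_congr rfl fun i hi => ?_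
    rw [abs_of_nonneg (Real.rpow_nonneg (hf i hi) _), ← Real.rpow_mul (hf i hi),
      div_mul_cancel₀ _ (ne_of_gt hs0)]
  have e2 : ∑ i ∈ A, |f i ^ ((s-1)/s)| ^ (s/(s-1)) = ∑ i ∈ A, f i := by
    refine Finset.sum_congr rfl fun i hi => ?_
    rw [abs_of_nonneg (Real.rpow_nonneg (hf i hi) _), ← Real.rpow_mul (hf i hi),
      show (s-1)/s * (s/(s-1)) = 1 by field_simp, Real.rpow_one]
  rw [e0, e1, e2] at h2
  rw [show 1/(s/(s-1)) = (s-1)/s by rw [one_div_div]] at h2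
  rw [one_div] at h2 ⊢
  exact h2

lemma holder_card {ι : Type*} (A : Finset ι) (f : ι → ℝ) (hf : ∀ i ∈ A, 0 ≤ f i)
    {s : ℝ} (hs : 1 < s) :
    ∑ i ∈ A, f i ^ (1/s) ≤ (A.card : ℝ) ^ ((s-1)/s) * (∑ i ∈ A, f i) ^ (1/s) := by
  have hs0 : (0:ℝ) < s := lt_trans one_pos hs
  have hs1 : (0:ℝ) < s - 1 := by linarith
  have hpq : Real.HolderConjugate (s/(s-1)) s := by
    refine Real.holderConjugate_iff.mpr ⟨?_, ?_⟩
    · rw [lt_div_iff₀ hs1]; linarith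
    · rw [inv_div]; field_simp; ring
  have h2 := Real.inner_le_Lp_mul_Lq A (fun _ => (1:ℝ)) (fun i => f i ^ (1/s)) hpq
  simp only [one_mul] at h2
  have e1 : ∑ i ∈ A, |(1:ℝ)| ^ (s/(s-1)) = (A.card : ℝ) := by simp
  have e2 : ∑ i ∈ A, |f i ^ (1/s)| ^ s = ∑ i ∈ A, f i := by
    refine Finset.sum_congr rfl fun i hi => ?_
    rw [abs_of_nonneg (Real.rpow_nonneg (hf i hi) _), ← Real.rpow_mul (hf i hi),
      one_div_mul_cancel (ne_of_gt hs0), Real.rpow_one]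
  rw [e1, e2, show 1/(s/(s-1)) = (s-1)/s by rw [one_div_div]] at h2
  exact h2

section proj

variable {E : Type*} [NormedAddCommGroup E] [InnerProductSpace ℝ E]

/-- The component of `x` orthogonal to `ω`. -/
noncomputable def radProj (ω x : E) : E := x - (inner ℝ x ω : ℝ) • ω

lemma radProj_sub (ω p q : E) :
    radProj ω p - radProj ω q = (p - q) - ((inner ℝ p ω : ℝ) - (inner ℝ q ω : ℝ)) • ω := by
  unfold radProj
  rw [sub_smul]
  abel

lemma radProj_key3 (ω p q : E) (h : radProj ω p = radProj ω q) :
    p - q = ((inner ℝ p ω : ℝ) - (inner ℝ q ω : ℝ)) • ω := by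
  have h0 : radProj ω p - radProj ω q = 0 := by rw [h, sub_self]
  rw [radProj_sub] at h0
  exact sub_eq_zero.mp h0

lemma radProj_key3norm (ω p q : E) (hω : ‖ω‖ = 1) (h : radProj ω p = radProj ω q) :
    ‖p - q‖ = |(inner ℝ p ω : ℝ) - (inner ℝ q ω : ℝ)| := by
  rw [radProj_key3 ω p q h, norm_smul, hω, mul_one, Real.norm_eq_abs]

lemma radProj_key1 (p q : E) (hpq : p ≠ q) :
    radProj (‖p - q‖⁻¹ • (p - q)) p = radProj (‖p - q‖⁻¹ • (p - q)) q := by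
  have hr : ‖p - q‖ ≠ 0 := norm_ne_zero_iff.2 (sub_ne_zero.2 hpq)
  set ω := ‖p - q‖⁻¹ • (p - q) with hωdef
  have hip : (inner ℝ p ω : ℝ) - (inner ℝ q ω : ℝ) = ‖p - q‖ := by
    rw [← inner_sub_left, hωdef, real_inner_smul_right, real_inner_self_eq_norm_mul_norm,
      ← mul_assoc, inv_mul_cancel₀ hr, one_mul]
  have : radProj ω p - radProj ω q = 0 := by
    rw [radProj_sub, hip, hωdef, smul_smul, mul_inv_cancel₀ hr, one_smul, sub_self]
  exact sub_eq_zero.mp this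

lemma radProj_key2 (ω p q : E) (hω : ‖ω‖ = 1) (hpq : p ≠ q)
    (h : radProj ω p = radProj ω q) :
    ω = ‖p - q‖⁻¹ • (p - q) ∨ ω = ‖q - p‖⁻¹ • (q - p) := by
  set t := (inner ℝ p ω : ℝ) - (inner ℝ q ω : ℝ) with ht
  have hkey := radProj_key3 ω p q h
  rw [← ht] at hkey
  have htne : t ≠ 0 := by
    intro h0
    rw [h0, zero_smul] at hkey
    exact hpq (sub_eq_zero.mp hkey)
  have hnorm : ‖p - q‖ = |t| := radProj_key3norm ω p q hω h
  rcases lt_or_gt_of_ne htne with hneg | hpos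
  · right
    have h1 : q - p = (-t) • ω := by rw [neg_smul, ← hkey, neg_sub]
    have h2 : ‖q - p‖ = -t := by rw [norm_sub_rev, hnorm, abs_of_neg hneg]
    rw [h2, h1, smul_smul, inv_mul_cancel₀ (by intro h0; apply htne; linarith [neg_eq_zero.mp h0] : -t ≠ 0), one_smul]
  · left
    have h2 : ‖p - q‖ = t := by rw [hnorm, abs_of_pos hpos]
    rw [h2, hkey, smul_smul, inv_mul_cancel₀ (ne_of_gt hpos), one_smul]

end proj

open Finset in
lemma per_direction_bound {d : ℕ} {s L : ℝ} (hd1 : 1 < s) (hL : 0 < L)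
    (P : Finset (EuclideanSpace ℝ (Fin d))) {n : ℕ} (hcard : P.card = n)
    (hdiam : ∀ p ∈ P, ∀ q ∈ P, ‖p - q‖ ≤ L)
    (ω : EuclideanSpace ℝ (Fin d)) (hωn : ‖ω‖ = 1) :
    (∑ p ∈ P, ∑ q ∈ P, if p ≠ q ∧ radProj ω p = radProj ω q then (1:ℝ) else 0)
      ≤ 2 * (L ^ s * ∑ p ∈ P, ∑ q ∈ P,
          (if p ≠ q ∧ radProj ω p = radProj ω q then ‖p - q‖ ^ (-s) else 0)) ^ (1/s)
        * (n:ℝ) ^ ((s-1)/s) := by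
  have hs0 : (0:ℝ) < s := lt_trans one_pos hd1
  have hs1 : (0:ℝ) < s - 1 := by linarith
  set B := P.image (radProj ω) with hBdef
  have hmap : ∀ p ∈ P, radProj ω p ∈ B := fun p hp => Finset.mem_image_of_mem _ hp
  have reorg : ∀ f : EuclideanSpace ℝ (Fin d) → EuclideanSpace ℝ (Fin d) → ℝ,
      (∑ p ∈ P, ∑ q ∈ P, if p ≠ q ∧ radProj ω p = radProj ω q then f p q else 0)
      = ∑ b ∈ B, ∑ p ∈ P.filter (fun p => radProj ω p = b),
          ∑ q ∈ P.filter (fun q => radProj ω q = b), (if p ≠ q then f p q else 0) := by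
    intro f
    rw [← Finset.sum_fiberwise_of_maps_to hmap
      (fun p => ∑ q ∈ P, if p ≠ q ∧ radProj ω p = radProj ω q then f p q else 0)]
    refine Finset.sum_congr rfl fun b _ => ?_
    refine Finset.sum_congr rfl fun p hp => ?_
    rw [Finset.mem_filter] at hp
    rw [Finset.sum_filter]
    refine Finset.sum_congr rfl fun q _ => ?_
    by_cases h1 : radProj ω q = b
    · by_cases h2 : p = q
      · rw [if_neg (by simp [h2]), if_pos h1, if_neg (by simp [h2])]
      · rw [if_pos ⟨h2, by rw [hp.2, h1]⟩, if_pos h1, if_pos h2]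
    · rw [if_neg (fun hcon => h1 (by rw [← hcon.2, hp.2])), if_neg h1]
  have hk1 : ∀ b ∈ B, 1 ≤ (P.filter (fun p => radProj ω p = b)).card := by
    intro b hb
    obtain ⟨p, hp, rfl⟩ := Finset.mem_image.1 hb
    exact Finset.card_pos.2 ⟨p, Finset.mem_filter.2 ⟨hp, rfl⟩⟩
  set a : EuclideanSpace ℝ (Fin d) → ℝ :=
    fun b => ((P.filter (fun p => radProj ω p = b)).card : ℝ) - 1 with hadef
  have ha_nonneg : ∀ b ∈ B, 0 ≤ a b := by
    intro b hb
    have := hk1 b hb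
    simp only [hadef]
    have h1 : (1:ℝ) ≤ ((P.filter (fun p => radProj ω p = b)).card : ℝ) := by exact_mod_cast this
    linarith
  have hasum : ∑ b ∈ B, a b ≤ (n:ℝ) := by
    have hksum : ∑ b ∈ B, ((P.filter (fun p => radProj ω p = b)).card : ℝ) = (n:ℝ) := by
      rw [← hcard]
      exact_mod_cast (congrArg Nat.cast (Finset.card_eq_sum_card_image (radProj ω) P)).symm
    calc ∑ b ∈ B, a b ≤ ∑ b ∈ B, ((P.filter (fun p => radProj ω p = b)).card : ℝ) := by
          refine Finset.sum_le_sum fun b _ => ?_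
          simp only [hadef]
          linarith
      _ = (n:ℝ) := hksum
  -- count within fibers
  have fibcount : ∀ b ∈ B,
      ∑ p ∈ P.filter (fun p => radProj ω p = b),
        ∑ q ∈ P.filter (fun q => radProj ω q = b), (if p ≠ q then (1:ℝ) else 0)
      = (a b + 1) * a b := by
    intro b hb
    have base : ∀ p ∈ P.filter (fun p => radProj ω p = b),
        ∑ q ∈ P.filter (fun q => radProj ω q = b), (if p ≠ q then (1:ℝ) else 0) = a b := by
      intro p hp
      have e1 : ∑ q ∈ P.filter (fun q => radProj ω q = b), (if p ≠ q then (1:ℝ) else 0)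
          = ∑ q ∈ P.filter (fun q => radProj ω q = b),
              ((1:ℝ) - if p = q then (1:ℝ) else 0) := by
        refine Finset.sum_congr rfl fun q _ => ?_
        by_cases h : p = q <;> simp [h]
      rw [e1, Finset.sum_sub_distrib, Finset.sum_const, Finset.sum_ite_eq, if_pos hp]
      simp only [hadef]
      rw [nsmul_eq_mul, mul_one]
    rw [Finset.sum_congr rfl base, Finset.sum_const, nsmul_eq_mul]
    have : ((P.filter (fun p => radProj ω p = b)).card : ℝ) = a b + 1 := by
      simp only [hadef]; ring
    rw [this]
  have hQ : (∑ p ∈ P, ∑ q ∈ P, if p ≠ q ∧ radProj ω p = radProj ω q then (1:ℝ) else 0) = ∑ b ∈ B, (a b + 1) * a b := by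
    rw [reorg (fun _ _ => (1:ℝ))]
    exact Finset.sum_congr rfl fibcount
  -- fiber energy bound
  have hEb : ∀ b ∈ B, a b ^ (1+s) ≤ L ^ s *
      ∑ p ∈ P.filter (fun p => radProj ω p = b),
        ∑ q ∈ P.filter (fun q => radProj ω q = b), (if p ≠ q then ‖p - q‖ ^ (-s) else 0) := by
    intro b hb
    have hFP : ∀ p ∈ P.filter (fun p => radProj ω p = b), p ∈ P :=
      fun p hp => (Finset.mem_filter.1 hp).1
    have hFproj : ∀ p ∈ P.filter (fun p => radProj ω p = b), radProj ω p = b :=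
      fun p hp => (Finset.mem_filter.1 hp).2
    have hinj : ∀ p ∈ P.filter (fun p => radProj ω p = b),
        ∀ q ∈ P.filter (fun q => radProj ω q = b),
        (inner ℝ p ω : ℝ) = (inner ℝ q ω : ℝ) → p = q := by
      intro p hp q hq hieq
      have hproj : radProj ω p = radProj ω q := by rw [hFproj p hp, hFproj q hq]
      have := radProj_key3 ω p q hproj
      rw [hieq, sub_self, zero_smul] at this
      exact sub_eq_zero.mp this
    have hdist : ∀ p ∈ P.filter (fun p => radProj ω p = b),
        ∀ q ∈ P.filter (fun q => radProj ω q = b),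
        |(inner ℝ p ω : ℝ) - (inner ℝ q ω : ℝ)| = ‖p - q‖ := by
      intro p hp q hq
      have hproj : radProj ω p = radProj ω q := by rw [hFproj p hp, hFproj q hq]
      exact (radProj_key3norm ω p q hωn hproj).symm
    set T := (P.filter (fun p => radProj ω p = b)).image (fun p => (inner ℝ p ω : ℝ)) with hTdef
    have hTL : ∀ t ∈ T, ∀ t' ∈ T, |t - t'| ≤ L := by
      intro t ht t' ht'
      obtain ⟨p, hp, rfl⟩ := Finset.mem_image.1 ht
      obtain ⟨q, hq, rfl⟩ := Finset.mem_image.1 ht'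
      rw [hdist p hp q hq]
      exact hdiam p (hFP p hp) q (hFP q hq)
    have h1d := oneD_energy hd1 hL T hTL
    have hTcard : T.card = (P.filter (fun p => radProj ω p = b)).card :=
      Finset.card_image_of_injOn (fun p hp q hq h => hinj p hp q hq h)
    have hcast : ((T.card - 1 : ℕ) : ℝ) = a b := by
      rw [hTcard, Nat.cast_sub (hk1 b hb)]
      simp only [hadef]
      norm_num
    have htrans : ∑ t ∈ T, ∑ t' ∈ T, (if t ≠ t' then |t - t'| ^ (-s) else 0)
        = ∑ p ∈ P.filter (fun p => radProj ω p = b),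
            ∑ q ∈ P.filter (fun q => radProj ω q = b),
              (if p ≠ q then ‖p - q‖ ^ (-s) else 0) := by
      rw [hTdef, Finset.sum_image (fun p hp q hq h => hinj p hp q hq h)]
      refine Finset.sum_congr rfl fun p hp => ?_
      rw [Finset.sum_image (fun x hx y hy h => hinj x hx y hy h)]
      refine Finset.sum_congr rfl fun q hq => ?_
      by_cases h : p = q
      · rw [if_neg (by simp [h]), if_neg (by simp [h])]
      · have hne : (inner ℝ p ω : ℝ) ≠ (inner ℝ q ω : ℝ) := fun hc => h (hinj p hp q hq hc)
        rw [if_pos hne, if_pos h, hdist p hp q hq]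
    rw [hcast, htrans] at h1d
    exact h1d
  have hEsum : ∑ b ∈ B, a b ^ (1+s) ≤ L ^ s * (∑ p ∈ P, ∑ q ∈ P, if p ≠ q ∧ radProj ω p = radProj ω q then ‖p - q‖ ^ (-s) else 0) := by
    rw [reorg (fun p q => ‖p - q‖ ^ (-s)), Finset.mul_sum]
    exact Finset.sum_le_sum hEb
  -- Hölder interpolation
  have h2a : ∀ b ∈ B, (a b + 1) * a b ≤ 2 * a b ^ (2:ℝ) := by
    intro b hb
    have hx := ha_nonneg b hb
    have hr2 : a b ^ (2:ℝ) = a b * a b := by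
      rw [show (2:ℝ) = ((2:ℕ):ℝ) by norm_num, Real.rpow_natCast]; ring
    rw [hr2]
    have hcases : a b = 0 ∨ 1 ≤ a b := by
      rcases Nat.lt_or_ge (P.filter (fun p => radProj ω p = b)).card 2 with hc | hc
      · left
        have : (P.filter (fun p => radProj ω p = b)).card = 1 := by
          have := hk1 b hb; omega
        simp only [hadef]; rw [this]; norm_num
      · right
        have h2 : (2:ℝ) ≤ ((P.filter (fun p => radProj ω p = b)).card : ℝ) := by
          exact_mod_cast hc
        simp only [hadef]; linarith
    rcases hcases with h0 | h1
    · rw [h0]; ring_nf; exact le_refl 0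
    · nlinarith
  have hinterp := holder_interp B a ha_nonneg hd1
  have hEnonneg : (0:ℝ) ≤ ∑ p ∈ P, ∑ q ∈ P,
      (if p ≠ q ∧ radProj ω p = radProj ω q then ‖p - q‖ ^ (-s) else 0) := by
    refine Finset.sum_nonneg fun p _ => Finset.sum_nonneg fun q _ => ?_
    split
    · positivity
    · exact le_refl 0
  have hsum_nonneg1 : (0:ℝ) ≤ ∑ b ∈ B, a b ^ (1+s) :=
    Finset.sum_nonneg fun b hb => Real.rpow_nonneg (ha_nonneg b hb) _
  have hsum_nonneg2 : (0:ℝ) ≤ ∑ b ∈ B, a b :=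
    Finset.sum_nonneg ha_nonneg
  calc (∑ p ∈ P, ∑ q ∈ P, if p ≠ q ∧ radProj ω p = radProj ω q then (1:ℝ) else 0)
      = ∑ b ∈ B, (a b + 1) * a b := hQ
    _ ≤ ∑ b ∈ B, 2 * a b ^ (2:ℝ) := Finset.sum_le_sum h2a
    _ = 2 * ∑ b ∈ B, a b ^ (2:ℝ) := by rw [Finset.mul_sum]
    _ ≤ 2 * ((∑ b ∈ B, a b ^ (1+s)) ^ (1/s) * (∑ b ∈ B, a b) ^ ((s-1)/s)) := by
        linarith [hinterp]
    _ ≤ 2 * ((L ^ s * (∑ p ∈ P, ∑ q ∈ P, if p ≠ q ∧ radProj ω p = radProj ω q then ‖p - q‖ ^ (-s) else 0)) ^ (1/s) * (n:ℝ) ^ ((s-1)/s)) := by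
        have m1 : (∑ b ∈ B, a b ^ (1+s)) ^ (1/s) ≤ (L ^ s * (∑ p ∈ P, ∑ q ∈ P, if p ≠ q ∧ radProj ω p = radProj ω q then ‖p - q‖ ^ (-s) else 0)) ^ (1/s) :=
          Real.rpow_le_rpow hsum_nonneg1 hEsum (by positivity)
        have m2 : (∑ b ∈ B, a b) ^ ((s-1)/s) ≤ (n:ℝ) ^ ((s-1)/s) :=
          Real.rpow_le_rpow hsum_nonneg2 hasum (by positivity)
        have := mul_le_mul m1 m2 (Real.rpow_nonneg hsum_nonneg2 _)
          (Real.rpow_nonneg (mul_nonneg (Real.rpow_nonneg (le_of_lt hL) s) hEnonneg) _)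
        linarith
    _ = 2 * (L ^ s * (∑ p ∈ P, ∑ q ∈ P, if p ≠ q ∧ radProj ω p = radProj ω q then ‖p - q‖ ^ (-s) else 0)) ^ (1/s) * (n:ℝ) ^ ((s-1)/s) := by ring


end auxiliary_lemmas

theorem directions_of_adaptable_discrete_set (d : ℕ) (hd : 2 ≤ d)
    (s : ℝ) (hs : (d : ℝ) - 1 < s) (K : ℝ) (hK : 0 < K) :
    ∃ c : ℝ, 0 < c ∧
      ∀ (n : ℕ) (P : Finset (EuclideanSpace ℝ (Fin d))), 2 ≤ n → P.card = n →
        (↑P ⊆ {x : EuclideanSpace ℝ (Fin d) | ∀ i, x i ∈ Set.Icc (0 : ℝ) 1}) →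
        (∀ p ∈ P, ∀ q ∈ P, p ≠ q → (n : ℝ) ^ (-(1 : ℝ) / s) ≤ ‖p - q‖) →
        ((n : ℝ) ^ (-(2 : ℤ)) *
            ∑ p ∈ P, ∑ q ∈ P, (if p ≠ q then ‖p - q‖ ^ (-s) else 0) ≤ K) →
        c * (n : ℝ) ^ (((d : ℝ) - 1) / s)
          ≤ ((directionSet (P : Set (EuclideanSpace ℝ (Fin d)))).ncard : ℝ) := by
  have hd2 : (2:ℝ) ≤ (d:ℝ) := by exact_mod_cast hd
  have hd1 : (1:ℝ) < s := by linarith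
  have hs0 : (0:ℝ) < s := by linarith
  have hs1 : (0:ℝ) < s - 1 := by linarith
  have hdpos : (0:ℝ) < d := by linarith
  set L : ℝ := Real.sqrt d with hLdef
  have hL : 0 < L := Real.sqrt_pos.2 hdpos
  set X : ℝ := 4 * L * (2*K) ^ (1/s) with hXdef
  have hX : 0 < X := by positivity
  set r : ℝ := s / (s-1) with hrdef
  have hr : 0 < r := by positivity
  refine ⟨X ^ (-r), Real.rpow_pos_of_pos hX _, ?_⟩
  intro n P hn hcard hcube hsep henergy
  have hn1 : (1:ℝ) ≤ (n:ℝ) := by exact_mod_cast Nat.one_le_of_lt hn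
  have hn0 : (0:ℝ) < (n:ℝ) := by linarith
  have hn2 : (2:ℝ) ≤ (n:ℝ) := by exact_mod_cast hn
  -- diameter bound
  have hdiam : ∀ p ∈ P, ∀ q ∈ P, ‖p - q‖ ≤ L := by
    intro p hp q hq
    have hp' := hcube (Finset.mem_coe.mpr hp)
    have hq' := hcube (Finset.mem_coe.mpr hq)
    simp only [Set.mem_setOf_eq] at hp' hq'
    rw [EuclideanSpace.norm_eq, hLdef]
    apply Real.sqrt_le_sqrt
    calc ∑ i, ‖(p - q) i‖ ^ 2 ≤ ∑ _i : Fin d, (1:ℝ) := by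
          apply Finset.sum_le_sum
          intro i _
          have h1 := hp' i
          have h2 := hq' i
          simp only [Set.mem_Icc] at h1 h2
          have habs : |(p - q) i| ≤ 1 := by
            have : (p - q) i = p i - q i := rfl
            rw [this, abs_le]
            constructor <;> linarith
          calc ‖(p - q) i‖ ^ 2 = |(p - q) i| ^ 2 := by rw [Real.norm_eq_abs]
            _ ≤ 1 ^ 2 := by apply pow_le_pow_left₀ (abs_nonneg _) habs
            _ = 1 := one_pow 2
      _ = (d:ℝ) := by simp
  -- the direction finset
  set D : Finset (EuclideanSpace ℝ (Fin d)) :=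
    ((P ×ˢ P).filter fun x => x.1 ≠ x.2).image
      (fun x => ‖x.1 - x.2‖⁻¹ • (x.1 - x.2)) with hDdef
  have hDmem : ∀ p ∈ P, ∀ q ∈ P, p ≠ q → ‖p - q‖⁻¹ • (p - q) ∈ D := by
    intro p hp q hq hpq
    refine Finset.mem_image.2 ⟨(p, q), ?_, rfl⟩
    exact Finset.mem_filter.2 ⟨Finset.mem_product.2 ⟨hp, hq⟩, hpq⟩
  have hDnorm : ∀ ω ∈ D, ‖ω‖ = 1 := by
    intro ω hω
    obtain ⟨x, hx, rfl⟩ := Finset.mem_image.1 hω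
    have hne : x.1 - x.2 ≠ 0 := sub_ne_zero.2 (Finset.mem_filter.1 hx).2
    have hnorm : ‖x.1 - x.2‖ ≠ 0 := norm_ne_zero_iff.2 hne
    rw [norm_smul, Real.norm_eq_abs, abs_of_nonneg (inv_nonneg.2 (norm_nonneg _)),
      inv_mul_cancel₀ hnorm]
  have hDset : directionSet (P : Set (EuclideanSpace ℝ (Fin d))) = ↑D := by
    ext ω
    constructor
    · rintro ⟨x, hx, y, hy, hxy, rfl⟩
      exact hDmem x hx y hy hxy
    · intro hω
      obtain ⟨x, hx, rfl⟩ := Finset.mem_image.1 hω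
      obtain ⟨hxx, hne⟩ := Finset.mem_filter.1 hx
      obtain ⟨h1, h2⟩ := Finset.mem_product.1 hxx
      exact ⟨x.1, h1, x.2, h2, hne, rfl⟩
  -- per-direction quantities
  set Qf : EuclideanSpace ℝ (Fin d) → ℝ := fun ω =>
    ∑ p ∈ P, ∑ q ∈ P, if p ≠ q ∧ radProj ω p = radProj ω q then (1:ℝ) else 0 with hQfdef
  set Ef : EuclideanSpace ℝ (Fin d) → ℝ := fun ω =>
    ∑ p ∈ P, ∑ q ∈ P, if p ≠ q ∧ radProj ω p = radProj ω q then ‖p - q‖ ^ (-s) else 0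
    with hEfdef
  have hEf_nonneg : ∀ ω, 0 ≤ Ef ω := by
    intro ω
    refine Finset.sum_nonneg fun p _ => Finset.sum_nonneg fun q _ => ?_
    split
    · positivity
    · exact le_refl 0
  have step1 : (n:ℝ) * ((n:ℝ) - 1) ≤ ∑ ω ∈ D, Qf ω := by
    have base : ∀ p ∈ P, ∑ q ∈ P, (if p ≠ q then (1:ℝ) else 0) = (n:ℝ) - 1 := by
      intro p hp
      have e1 : ∑ q ∈ P, (if p ≠ q then (1:ℝ) else 0)
          = ∑ q ∈ P, ((1:ℝ) - if p = q then (1:ℝ) else 0) := by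
        refine Finset.sum_congr rfl fun q _ => ?_
        by_cases h : p = q <;> simp [h]
      rw [e1, Finset.sum_sub_distrib, Finset.sum_const, Finset.sum_ite_eq, if_pos hp, hcard]
      simp
    have pw : ∀ p ∈ P, ∀ q ∈ P, (if p ≠ q then (1:ℝ) else 0) ≤
        ∑ ω ∈ D, (if p ≠ q ∧ radProj ω p = radProj ω q then (1:ℝ) else 0) := by
      intro p hp q hq
      by_cases h : p = q
      · rw [if_neg (by simp [h])]
        refine Finset.sum_nonneg fun ω _ => ?_
        split
        · exact zero_le_one
        · exact le_refl 0
      · rw [if_pos h]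
        have hmem := hDmem p hp q hq h
        have hle := Finset.single_le_sum
          (f := fun ω => if p ≠ q ∧ radProj ω p = radProj ω q then (1:ℝ) else 0)
          (fun ω _ => by split; exacts [zero_le_one, le_refl 0]) hmem
        refine le_trans (le_of_eq ?_) hle
        rw [if_pos ⟨h, radProj_key1 p q h⟩]
    calc (n:ℝ) * ((n:ℝ) - 1) = ∑ _p ∈ P, ((n:ℝ) - 1) := by
          rw [Finset.sum_const, hcard, nsmul_eq_mul]
      _ = ∑ p ∈ P, ∑ q ∈ P, (if p ≠ q then (1:ℝ) else 0) :=
          (Finset.sum_congr rfl fun p hp => (base p hp).symm)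
      _ ≤ ∑ p ∈ P, ∑ q ∈ P, ∑ ω ∈ D,
            (if p ≠ q ∧ radProj ω p = radProj ω q then (1:ℝ) else 0) := by
          refine Finset.sum_le_sum fun p hp => ?_
          refine Finset.sum_le_sum fun q hq => ?_
          exact pw p hp q hq
      _ = ∑ ω ∈ D, Qf ω := by
          rw [show ∑ p ∈ P, ∑ q ∈ P, ∑ ω ∈ D,
              (if p ≠ q ∧ radProj ω p = radProj ω q then (1:ℝ) else 0)
              = ∑ p ∈ P, ∑ ω ∈ D, ∑ q ∈ P,
              (if p ≠ q ∧ radProj ω p = radProj ω q then (1:ℝ) else 0) from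
            Finset.sum_congr rfl fun p _ => Finset.sum_comm]
          exact Finset.sum_comm
  have step2 : ∑ ω ∈ D, Ef ω ≤ 2 * K * (n:ℝ) ^ (2:ℝ) := by
    have swap : ∑ ω ∈ D, Ef ω = ∑ p ∈ P, ∑ q ∈ P, ∑ ω ∈ D,
        (if p ≠ q ∧ radProj ω p = radProj ω q then ‖p - q‖ ^ (-s) else 0) := by
      rw [show (∑ ω ∈ D, Ef ω) = ∑ p ∈ P, ∑ ω ∈ D, ∑ q ∈ P,
          (if p ≠ q ∧ radProj ω p = radProj ω q then ‖p - q‖ ^ (-s) else 0) from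
        Finset.sum_comm]
      exact Finset.sum_congr rfl fun p _ => Finset.sum_comm
    have pw : ∀ p ∈ P, ∀ q ∈ P,
        ∑ ω ∈ D, (if p ≠ q ∧ radProj ω p = radProj ω q then ‖p - q‖ ^ (-s) else 0)
        ≤ 2 * (if p ≠ q then ‖p - q‖ ^ (-s) else 0) := by
      intro p hp q hq
      by_cases h : p = q
      · rw [if_neg (by simp [h]), Finset.sum_eq_zero, mul_zero]
        intro ω _
        rw [if_neg (by simp [h])]
      · rw [if_pos h]
        have he : (0:ℝ) ≤ ‖p - q‖ ^ (-s) := Real.rpow_nonneg (norm_nonneg _) _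
        have e1 : ∑ ω ∈ D, (if p ≠ q ∧ radProj ω p = radProj ω q then ‖p - q‖ ^ (-s) else 0)
            = ∑ _ω ∈ D.filter (fun ω => p ≠ q ∧ radProj ω p = radProj ω q), ‖p - q‖ ^ (-s) :=
          (Finset.sum_filter _ _).symm
        rw [e1, Finset.sum_const, nsmul_eq_mul]
        have hsub : D.filter (fun ω => p ≠ q ∧ radProj ω p = radProj ω q) ⊆
            {‖p - q‖⁻¹ • (p - q), ‖q - p‖⁻¹ • (q - p)} := by
          intro ω hω
          obtain ⟨hωD, _, hproj⟩ := Finset.mem_filter.1 hω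
          rcases radProj_key2 ω p q (hDnorm ω hωD) h hproj with h1 | h1
          · exact Finset.mem_insert.2 (Or.inl h1)
          · exact Finset.mem_insert.2 (Or.inr (Finset.mem_singleton.2 h1))
        have hcard2 : (D.filter (fun ω => p ≠ q ∧ radProj ω p = radProj ω q)).card ≤ 2 :=
          le_trans (Finset.card_le_card hsub)
            (le_trans (Finset.card_insert_le _ _) (by simp))
        apply mul_le_mul_of_nonneg_right _ he
        exact_mod_cast hcard2
    have hEtot : ∑ p ∈ P, ∑ q ∈ P, (if p ≠ q then ‖p - q‖ ^ (-s) else 0)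
        ≤ K * (n:ℝ) ^ (2:ℝ) := by
      have hpow : ((n:ℝ) ^ (-(2:ℤ))) = ((n:ℝ) ^ (2:ℝ))⁻¹ := by
        rw [zpow_neg, show ((2:ℝ)) = ((2:ℕ):ℝ) by norm_num, Real.rpow_natCast]
        congr 1
      have h2 : (0:ℝ) < (n:ℝ) ^ (2:ℝ) := Real.rpow_pos_of_pos hn0 _
      rw [hpow, inv_mul_le_iff₀ h2] at henergy
      linarith [henergy]
    calc ∑ ω ∈ D, Ef ω
        = ∑ p ∈ P, ∑ q ∈ P, ∑ ω ∈ D,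
            (if p ≠ q ∧ radProj ω p = radProj ω q then ‖p - q‖ ^ (-s) else 0) := swap
      _ ≤ ∑ p ∈ P, ∑ q ∈ P, 2 * (if p ≠ q then ‖p - q‖ ^ (-s) else 0) := by
          refine Finset.sum_le_sum fun p hp => ?_
          refine Finset.sum_le_sum fun q hq => ?_
          exact pw p hp q hq
      _ = 2 * ∑ p ∈ P, ∑ q ∈ P, (if p ≠ q then ‖p - q‖ ^ (-s) else 0) := by
          rw [Finset.mul_sum]
          exact Finset.sum_congr rfl fun p _ => (Finset.mul_sum _ _ _).symm
      _ ≤ 2 * (K * (n:ℝ) ^ (2:ℝ)) := by linarith [hEtot]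
      _ = 2 * K * (n:ℝ) ^ (2:ℝ) := by ring
  have step3 : ∀ ω ∈ D, Qf ω ≤ 2 * (L ^ s * Ef ω) ^ (1/s) * (n:ℝ) ^ ((s-1)/s) := by
    intro ω hω
    exact per_direction_bound hd1 hL P hcard hdiam ω (hDnorm ω hω)
  have combine : (n : ℝ) ≤ X ^ r * (D.card : ℝ) := by
    have hLs : (L ^ s) ^ (1/s) = L := by
      rw [← Real.rpow_mul (le_of_lt hL), mul_one_div, div_self (ne_of_gt hs0), Real.rpow_one]
    have hup : ∑ ω ∈ D, Qf ω ≤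
        2 * L * (n:ℝ) ^ ((s-1)/s) * ((D.card:ℝ) ^ ((s-1)/s) * (∑ ω ∈ D, Ef ω) ^ (1/s)) := by
      calc ∑ ω ∈ D, Qf ω ≤ ∑ ω ∈ D, 2 * (L ^ s * Ef ω) ^ (1/s) * (n:ℝ) ^ ((s-1)/s) :=
            Finset.sum_le_sum step3
        _ = 2 * L * (n:ℝ) ^ ((s-1)/s) * ∑ ω ∈ D, (Ef ω) ^ (1/s) := by
            rw [Finset.mul_sum]
            refine Finset.sum_congr rfl fun ω _ => ?_
            rw [Real.mul_rpow (by positivity) (hEf_nonneg ω), hLs]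
            ring
        _ ≤ 2 * L * (n:ℝ) ^ ((s-1)/s) * ((D.card:ℝ) ^ ((s-1)/s) * (∑ ω ∈ D, Ef ω) ^ (1/s)) := by
            apply mul_le_mul_of_nonneg_left _ (by positivity)
            exact holder_card D Ef (fun ω _ => hEf_nonneg ω) hd1
    have hED : (∑ ω ∈ D, Ef ω) ^ (1/s) ≤ (2*K) ^ (1/s) * (n:ℝ) ^ (2/s) := by
      have hst : (0:ℝ) ≤ ∑ ω ∈ D, Ef ω := Finset.sum_nonneg fun ω _ => hEf_nonneg ω
      calc (∑ ω ∈ D, Ef ω) ^ (1/s) ≤ (2 * K * (n:ℝ) ^ (2:ℝ)) ^ (1/s) :=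
            Real.rpow_le_rpow hst step2 (by positivity)
        _ = (2*K) ^ (1/s) * (n:ℝ) ^ (2/s) := by
            rw [Real.mul_rpow (by positivity) (by positivity),
              ← Real.rpow_mul (le_of_lt hn0)]
            congr 2
            field_simp
    have hlow : (n:ℝ) ^ (2:ℝ) / 2 ≤ ∑ ω ∈ D, Qf ω := by
      have h2 : (n:ℝ) ^ (2:ℝ) = (n:ℝ) * (n:ℝ) := by
        rw [show (2:ℝ) = ((2:ℕ):ℝ) by norm_num, Real.rpow_natCast]; ring
      have : (n:ℝ) ^ (2:ℝ) / 2 ≤ (n:ℝ) * ((n:ℝ) - 1) := by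
        rw [h2]; nlinarith
      linarith [step1]
    -- assemble
    have hEfD : ∑ ω ∈ D, Qf ω ≤
        X / 2 * ((n:ℝ) ^ ((s-1)/s) * ((n:ℝ) ^ (2/s) * (D.card:ℝ) ^ ((s-1)/s))) := by
      have h1 : 2 * L * (n:ℝ) ^ ((s-1)/s) * ((D.card:ℝ) ^ ((s-1)/s) * (∑ ω ∈ D, Ef ω) ^ (1/s))
          ≤ 2 * L * (n:ℝ) ^ ((s-1)/s) *
            ((D.card:ℝ) ^ ((s-1)/s) * ((2*K) ^ (1/s) * (n:ℝ) ^ (2/s))) := by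
        apply mul_le_mul_of_nonneg_left _ (by positivity)
        exact mul_le_mul_of_nonneg_left hED (Real.rpow_nonneg (Nat.cast_nonneg _) _)
      calc ∑ ω ∈ D, Qf ω ≤ _ := hup
        _ ≤ _ := h1
        _ = X / 2 * ((n:ℝ) ^ ((s-1)/s) * ((n:ℝ) ^ (2/s) * (D.card:ℝ) ^ ((s-1)/s))) := by
            rw [hXdef]; ring
    have hexp : (n:ℝ) ^ ((s-1)/s) * (n:ℝ) ^ (2/s) = (n:ℝ) ^ ((s+1)/s) := by
      rw [← Real.rpow_add hn0]
      congr 1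
      field_simp
      ring
    have hexp2 : (n:ℝ) ^ (2:ℝ) = (n:ℝ) ^ ((s+1)/s) * (n:ℝ) ^ ((s-1)/s) := by
      rw [← Real.rpow_add hn0]
      congr 1
      field_simp
      ring
    have hmid : (n:ℝ) ^ ((s+1)/s) * (n:ℝ) ^ ((s-1)/s) ≤
        (n:ℝ) ^ ((s+1)/s) * (X * (D.card:ℝ) ^ ((s-1)/s)) := by
      have := le_trans hlow hEfD
      rw [hexp2] at this
      calc (n:ℝ) ^ ((s+1)/s) * (n:ℝ) ^ ((s-1)/s)
          ≤ 2 * (X / 2 * ((n:ℝ) ^ ((s-1)/s) * ((n:ℝ) ^ (2/s) * (D.card:ℝ) ^ ((s-1)/s)))) := by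
            linarith
        _ = X * ((n:ℝ) ^ ((s-1)/s) * (n:ℝ) ^ (2/s)) * (D.card:ℝ) ^ ((s-1)/s) := by ring
        _ = (n:ℝ) ^ ((s+1)/s) * (X * (D.card:ℝ) ^ ((s-1)/s)) := by rw [hexp]; ring
    have hcancel : (n:ℝ) ^ ((s-1)/s) ≤ X * (D.card:ℝ) ^ ((s-1)/s) :=
      le_of_mul_le_mul_left hmid (Real.rpow_pos_of_pos hn0 _)
    have hrpow := Real.rpow_le_rpow (Real.rpow_nonneg (le_of_lt hn0) _) hcancel (le_of_lt hr)
    rw [← Real.rpow_mul (le_of_lt hn0)] at hrpow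
    have hone : (s-1)/s * r = 1 := by rw [hrdef]; field_simp
    rw [hone, Real.rpow_one] at hrpow
    rw [Real.mul_rpow (le_of_lt hX) (Real.rpow_nonneg (Nat.cast_nonneg _) _),
      ← Real.rpow_mul (Nat.cast_nonneg _), hone, Real.rpow_one] at hrpow
    exact hrpow
  have final : X ^ (-r) * (n:ℝ) ≤ (D.card : ℝ) := by
    rw [Real.rpow_neg (le_of_lt hX)]
    rw [inv_mul_le_iff₀ (Real.rpow_pos_of_pos hX r)]
    linarith [combine]
  calc X ^ (-r) * (n:ℝ) ^ (((d:ℝ)-1)/s) ≤ X ^ (-r) * (n:ℝ) := by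
        apply mul_le_mul_of_nonneg_left _ (le_of_lt (Real.rpow_pos_of_pos hX _))
        calc (n:ℝ) ^ (((d:ℝ)-1)/s) ≤ (n:ℝ) ^ (1:ℝ) := by
              apply Real.rpow_le_rpow_of_exponent_le hn1
              rw [div_le_one hs0]; linarith
          _ = (n:ℝ) := Real.rpow_one _
    _ ≤ (D.card : ℝ) := final
    _ = ((directionSet (P : Set (EuclideanSpace ℝ (Fin d)))).ncard : ℝ) := by
        rw [hDset, Set.ncard_coe_finset]
end

section
/- Let m ≥ 1, let ν be a finite Borel measure on ℝ^m, and let c₀ > 0. Define the restricted maximal function ν_*(t) = sup_{0 < ε < c₀} ν(B(t,ε)) / ℒ^m(B(t,ε)), where ℒ^m is Lebesgue measure on ℝ^m and B(t,ε) is the ball of radius ε centered at t. If ν_* is Lebesgue-integrable on ℝ^m, then ν is absolutely continuous with respect to ℒ^m, and its Radon–Nikodym derivative f = dν/dℒ^m satisfies ∫_{ℝ^m} f dℒ^m = ν(ℝ^m); in particular, if ν ≠ 0 then the set {t : f(t) > 0} has positive Lebesgue measure. -/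
open MeasureTheory Metric Filter Module
open scoped ENNReal NNReal Topology

lemma aux_key (m : ℕ) (hm : 1 ≤ m)
    (ν : Measure (EuclideanSpace ℝ (Fin m))) [IsFiniteMeasure ν]
    {c₀ : ℝ} (hc₀ : 0 < c₀) {t : EuclideanSpace ℝ (Fin m)}
    (ht : Tendsto (fun r => ν (closedBall t r) / volume (closedBall t r)) (nhdsWithin 0 (Set.Ioi 0))
      (nhds (ν.rnDeriv volume t)))
    (ht' : ν.rnDeriv volume t < ⊤) {ε : ℝ} (hε : ε ∈ Set.Ioo 0 c₀) :
    ν (closedBall t ε) / volume (closedBall t ε) ≤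
      ENNReal.ofReal (⨆ ε ∈ Set.Ioo (0:ℝ) c₀,
        (ν (ball t ε)).toReal / (volume (ball t ε)).toReal) := by
  haveI : NeZero m := ⟨by omega⟩
  set d := finrank ℝ (EuclideanSpace ℝ (Fin m)) with hd
  set q : ℝ → ℝ := fun s => (ν (ball t s)).toReal / (volume (ball t s)).toReal with hq
  set M : ℝ := ⨆ s ∈ Set.Ioo (0:ℝ) c₀, q s with hMdef
  -- Step A : a uniform bound on the ball ratios
  have hlt : ν.rnDeriv volume t < ν.rnDeriv volume t + 1 :=
    ENNReal.lt_add_right ht'.ne one_ne_zero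
  have hev : ∀ᶠ s in nhdsWithin 0 (Set.Ioi 0),
      ν (closedBall t s) / volume (closedBall t s) < ν.rnDeriv volume t + 1 :=
    ht (Iio_mem_nhds hlt)
  obtain ⟨u, hu, huIoc⟩ := mem_nhdsGT_iff_exists_Ioc_subset.1 hev
  have hu0 : (0:ℝ) < u := hu
  set r₀ : ℝ := min u (c₀/2) with hr₀
  have hr₀pos : 0 < r₀ := lt_min hu0 (by linarith)
  have hballcb : ∀ s : ℝ, volume (ball t s) = volume (closedBall t s) := fun s =>
    (Measure.addHaar_closedBall_eq_addHaar_ball volume t s).symm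
  set L : ℝ≥0∞ := (ν.rnDeriv volume t + 1) ⊔ (ν Set.univ / volume (ball t r₀)) with hL
  have hLne : L ≠ ⊤ := by
    refine (max_lt ?_ ?_).ne
    · exact ENNReal.add_lt_top.2 ⟨ht', ENNReal.one_lt_top⟩
    · exact ENNReal.div_lt_top (measure_ne_top ν _) (measure_ball_pos volume t hr₀pos).ne'
  have hQle : ∀ s ∈ Set.Ioo (0:ℝ) c₀, ν (ball t s) / volume (ball t s) ≤ L := by
    intro s hs
    rcases le_or_gt s r₀ with h | h
    · refine le_trans ?_ (le_max_left _ _)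
      refine le_trans ?_ (le_of_lt (huIoc ⟨hs.1, h.trans (min_le_left _ _)⟩))
      rw [hballcb s]
      exact ENNReal.div_le_div_right (measure_mono ball_subset_closedBall) _
    · refine le_trans ?_ (le_max_right _ _)
      exact ENNReal.div_le_div (measure_mono (Set.subset_univ _))
        (measure_mono (ball_subset_ball h.le))
  have hqle : ∀ s ∈ Set.Ioo (0:ℝ) c₀, q s ≤ L.toReal := by
    intro s hs
    have h1 := hQle s hs
    have h2 : q s = (ν (ball t s) / volume (ball t s)).toReal := by
      rw [ENNReal.toReal_div]
    rw [h2]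
    exact ENNReal.toReal_mono hLne h1
  have hqnn : ∀ s, 0 ≤ q s := fun s =>
    div_nonneg ENNReal.toReal_nonneg ENNReal.toReal_nonneg
  have hbdd : BddAbove (Set.range fun s => ⨆ _ : s ∈ Set.Ioo (0:ℝ) c₀, q s) := by
    refine ⟨max L.toReal 0, ?_⟩
    rintro x ⟨s, rfl⟩
    dsimp only
    by_cases hs : s ∈ Set.Ioo (0:ℝ) c₀
    · haveI : Nonempty (s ∈ Set.Ioo (0:ℝ) c₀) := ⟨hs⟩
      rw [ciSup_const]
      exact le_max_of_le_left (hqle s hs)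
    · haveI : IsEmpty (s ∈ Set.Ioo (0:ℝ) c₀) := ⟨hs⟩
      rw [Real.iSup_of_isEmpty]
      exact le_max_right _ _
  have hqM : ∀ s ∈ Set.Ioo (0:ℝ) c₀, q s ≤ M := by
    intro s hs
    have h1 : (⨆ _ : s ∈ Set.Ioo (0:ℝ) c₀, q s) ≤ M := le_ciSup hbdd s
    haveI : Nonempty (s ∈ Set.Ioo (0:ℝ) c₀) := ⟨hs⟩
    have h2 : q s = ⨆ _ : s ∈ Set.Ioo (0:ℝ) c₀, q s := ciSup_const.symm
    rw [h2]; exact h1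
  -- Step B : the bound for each ε' in (ε, c₀)
  have hB0 : volume (ball (0 : EuclideanSpace ℝ (Fin m)) 1) ≠ 0 :=
    (measure_ball_pos volume _ one_pos).ne'
  have hBtop : volume (ball (0 : EuclideanSpace ℝ (Fin m)) 1) ≠ ⊤ :=
    measure_ball_lt_top.ne
  have hkey : ∀ ε' ∈ Set.Ioo ε c₀,
      ν (closedBall t ε) / volume (closedBall t ε) ≤
        ENNReal.ofReal M * ENNReal.ofReal ((ε'/ε)^d) := by
    intro ε' hε'
    have hε'0 : 0 < ε' := hε.1.trans hε'.1
    have hballpos : (0:ℝ≥0∞) < volume (ball t ε') := measure_ball_pos volume t hε'0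
    have hvtoppos : 0 < (volume (ball t ε')).toReal :=
      ENNReal.toReal_pos hballpos.ne' measure_ball_lt_top.ne
    have hQofReal : ν (ball t ε') / volume (ball t ε') = ENNReal.ofReal (q ε') := by
      rw [hq]
      rw [ENNReal.ofReal_div_of_pos hvtoppos, ENNReal.ofReal_toReal (measure_ne_top ν _),
        ENNReal.ofReal_toReal measure_ball_lt_top.ne]
    have hQM : ν (ball t ε') / volume (ball t ε') ≤ ENNReal.ofReal M := by
      rw [hQofReal]
      exact ENNReal.ofReal_le_ofReal (hqM ε' ⟨hε'0, hε'.2⟩)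
    have h1 : ν (ball t ε') ≤ ENNReal.ofReal M * volume (ball t ε') :=
      (ENNReal.div_le_iff_le_mul (Or.inl hballpos.ne')
        (Or.inl measure_ball_lt_top.ne)).1 hQM
    have h2 : ν (closedBall t ε) ≤ ENNReal.ofReal M * volume (ball t ε') :=
      le_trans (measure_mono (closedBall_subset_ball hε'.1)) h1
    have h3 : ν (closedBall t ε) / volume (closedBall t ε) ≤
        (ENNReal.ofReal M * volume (ball t ε')) / volume (closedBall t ε) :=
      ENNReal.div_le_div_right h2 _
    refine h3.trans (le_of_eq ?_)
    rw [mul_div_assoc]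
    congr 1
    rw [Measure.addHaar_ball volume t hε'0.le, Measure.addHaar_closedBall volume t hε.1.le,
      ENNReal.mul_div_mul_right _ _ hB0 hBtop, div_pow,
      ENNReal.ofReal_div_of_pos (pow_pos hε.1 _)]
  -- Step C : pass to the limit ε' → ε
  have hlim : Tendsto (fun ε' => ENNReal.ofReal M * ENNReal.ofReal ((ε'/ε)^d))
      (nhdsWithin ε (Set.Ioi ε)) (nhds (ENNReal.ofReal M)) := by
    have h1 : Tendsto (fun ε' : ℝ => (ε'/ε)^d) (nhds ε) (nhds ((ε/ε)^d)) :=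
      (tendsto_id.div_const ε).pow d
    rw [div_self hε.1.ne', one_pow] at h1
    have h2 : Tendsto (fun ε' : ℝ => ENNReal.ofReal ((ε'/ε)^d))
        (nhdsWithin ε (Set.Ioi ε)) (nhds 1) := by
      have h3 : Tendsto ENNReal.ofReal (nhds (1:ℝ)) (nhds (ENNReal.ofReal 1)) :=
        ENNReal.continuous_ofReal.tendsto 1
      have h4 := h3.comp (h1.mono_left (nhdsWithin_le_nhds (s := Set.Ioi ε)))
      simpa [Function.comp_def] using h4
    have h4 : Tendsto (fun ε' => ENNReal.ofReal M * ENNReal.ofReal ((ε'/ε)^d))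
        (nhdsWithin ε (Set.Ioi ε)) (nhds (ENNReal.ofReal M * 1)) :=
      ENNReal.Tendsto.const_mul h2 (Or.inr ENNReal.ofReal_ne_top)
    simpa using h4
  refine ge_of_tendsto hlim ?_
  filter_upwards [Ioo_mem_nhdsGT_of_mem ⟨le_refl ε, hε.2⟩] with ε' hε'
  exact hkey ε' hε'

theorem maximal_integrable_implies_ac (m : ℕ) (hm : 1 ≤ m)
    (ν : Measure (EuclideanSpace ℝ (Fin m))) [IsFiniteMeasure ν]
    (c₀ : ℝ) (hc₀ : 0 < c₀)
    (hint : Integrable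
      (fun t : EuclideanSpace ℝ (Fin m) =>
        ⨆ ε ∈ Set.Ioo (0 : ℝ) c₀,
          (ν (ball t ε)).toReal / (volume (ball t ε)).toReal)
      volume) :
    ν ≪ volume ∧
    (∫ t, (ν.rnDeriv volume t).toReal ∂volume) = (ν Set.univ).toReal ∧
    (ν ≠ 0 → 0 < volume {t : EuclideanSpace ℝ (Fin m) | 0 < ν.rnDeriv volume t}) := by
  classical
  haveI : NeZero m := ⟨by omega⟩
  set M : EuclideanSpace ℝ (Fin m) → ℝ := fun t =>
    ⨆ ε ∈ Set.Ioo (0:ℝ) c₀, (ν (ball t ε)).toReal / (volume (ball t ε)).toReal with hM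
  -- the sequence of radii
  set r : ℕ → ℝ := fun n => c₀ / (n + 2) with hr
  have hrmem : ∀ n, r n ∈ Set.Ioo (0:ℝ) c₀ := by
    intro n
    constructor
    · rw [hr]; positivity
    · rw [hr]
      exact div_lt_self hc₀ (by have := Nat.cast_nonneg (α := ℝ) n; linarith)
  have hrtend : Tendsto r atTop (nhdsWithin 0 (Set.Ioi 0)) := by
    refine tendsto_nhdsWithin_of_tendsto_nhds_of_eventually_within _ ?_
      (Eventually.of_forall fun n => (hrmem n).1)
    have h1 : Tendsto (fun n : ℕ => (n:ℝ) + 2) atTop atTop :=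
      tendsto_atTop_add_const_right atTop 2 tendsto_natCast_atTop_atTop
    simpa [hr] using (tendsto_const_nhds (x := c₀) (f := atTop (α := ℕ))).div_atTop h1
  -- measurability of the closed-ball measures via the product measure
  have hSmeas : ∀ ε : ℝ, MeasurableSet
      {p : EuclideanSpace ℝ (Fin m) × EuclideanSpace ℝ (Fin m) | dist p.2 p.1 ≤ ε} := by
    intro ε
    exact (isClosed_le (continuous_dist.comp (continuous_snd.prodMk continuous_fst))
      continuous_const).measurableSet
  have hset1 : ∀ (ε : ℝ) (t : EuclideanSpace ℝ (Fin m)),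
      (Prod.mk t ⁻¹' {p : EuclideanSpace ℝ (Fin m) × EuclideanSpace ℝ (Fin m) |
        dist p.2 p.1 ≤ ε}) = closedBall t ε := by
    intro ε t; ext x; simp [Metric.mem_closedBall]
  have hset2 : ∀ (ε : ℝ) (x : EuclideanSpace ℝ (Fin m)),
      ((fun t => (t, x)) ⁻¹' {p : EuclideanSpace ℝ (Fin m) × EuclideanSpace ℝ (Fin m) |
        dist p.2 p.1 ≤ ε}) = closedBall x ε := by
    intro ε x; ext y; simp [Metric.mem_closedBall, dist_comm]
  have hcb_meas : ∀ ε : ℝ,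
      Measurable fun t : EuclideanSpace ℝ (Fin m) => ν (closedBall t ε) := by
    intro ε
    have h := measurable_measure_prodMk_left (ν := ν) (hSmeas ε)
    simpa only [hset1 ε] using h
  have hFmeas : ∀ n, Measurable fun t : EuclideanSpace ℝ (Fin m) =>
      ν (closedBall t (r n)) / volume (closedBall t (r n)) := by
    intro n
    have h : (fun t : EuclideanSpace ℝ (Fin m) =>
        ν (closedBall t (r n)) / volume (closedBall t (r n))) = fun t =>
        ν (closedBall t (r n)) / volume (closedBall (0 : EuclideanSpace ℝ (Fin m)) (r n)) := by
      funext t; rw [Measure.addHaar_closedBall_center volume t]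
    rw [h]
    exact (hcb_meas _).div measurable_const
  -- Fubini : the integral of each ratio is exactly ν(univ)
  have hfub : ∀ n, (∫⁻ t, ν (closedBall t (r n)) / volume (closedBall t (r n)) ∂volume)
      = ν Set.univ := by
    intro n
    have hε0 : 0 < r n := (hrmem n).1
    have hV0 : volume (closedBall (0 : EuclideanSpace ℝ (Fin m)) (r n)) ≠ 0 :=
      (measure_closedBall_pos volume _ hε0).ne'
    have hVtop : volume (closedBall (0 : EuclideanSpace ℝ (Fin m)) (r n)) ≠ ⊤ :=
      measure_closedBall_lt_top.ne
    have hswap : (∫⁻ t, ν (closedBall t (r n)) ∂volume) =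
        volume (closedBall (0 : EuclideanSpace ℝ (Fin m)) (r n)) * ν Set.univ := by
      calc (∫⁻ t, ν (closedBall t (r n)) ∂volume)
          = ∫⁻ t, ν (Prod.mk t ⁻¹' {p : EuclideanSpace ℝ (Fin m) × EuclideanSpace ℝ (Fin m) |
              dist p.2 p.1 ≤ r n}) ∂volume :=
            lintegral_congr fun t => by rw [hset1]
        _ = (volume.prod ν) {p : EuclideanSpace ℝ (Fin m) × EuclideanSpace ℝ (Fin m) |
              dist p.2 p.1 ≤ r n} := (Measure.prod_apply (hSmeas (r n))).symm
        _ = ∫⁻ x, volume ((fun t => (t, x)) ⁻¹'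
              {p : EuclideanSpace ℝ (Fin m) × EuclideanSpace ℝ (Fin m) |
              dist p.2 p.1 ≤ r n}) ∂ν := Measure.prod_apply_symm (hSmeas (r n))
        _ = ∫⁻ _, volume (closedBall (0 : EuclideanSpace ℝ (Fin m)) (r n)) ∂ν :=
            lintegral_congr fun x => by rw [hset2, Measure.addHaar_closedBall_center volume x]
        _ = volume (closedBall (0 : EuclideanSpace ℝ (Fin m)) (r n)) * ν Set.univ :=
            lintegral_const _
    calc (∫⁻ t, ν (closedBall t (r n)) / volume (closedBall t (r n)) ∂volume)
        = ∫⁻ t, ν (closedBall t (r n)) *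
            (volume (closedBall (0 : EuclideanSpace ℝ (Fin m)) (r n)))⁻¹ ∂volume :=
          lintegral_congr fun t => by
            rw [Measure.addHaar_closedBall_center volume t, div_eq_mul_inv]
      _ = (∫⁻ t, ν (closedBall t (r n)) ∂volume) *
            (volume (closedBall (0 : EuclideanSpace ℝ (Fin m)) (r n)))⁻¹ :=
          lintegral_mul_const' _ _ (by simp [hV0])
      _ = ν Set.univ := by
          rw [hswap, mul_comm (volume _), mul_assoc, ENNReal.mul_inv_cancel hV0 hVtop, mul_one]
  -- Besicovitch differentiation
  have hbes := Besicovitch.ae_tendsto_rnDeriv ν volume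
  have hfin := Measure.rnDeriv_lt_top ν volume
  have hdom : ∀ᵐ t ∂(volume : Measure (EuclideanSpace ℝ (Fin m))), ∀ n,
      ν (closedBall t (r n)) / volume (closedBall t (r n)) ≤ ENNReal.ofReal (M t) := by
    filter_upwards [hbes, hfin] with t h1 h2 n
    exact aux_key m hm ν hc₀ h1 h2 (hrmem n)
  have hlimsup : ∀ᵐ t ∂(volume : Measure (EuclideanSpace ℝ (Fin m))),
      limsup (fun n => ν (closedBall t (r n)) / volume (closedBall t (r n))) atTop
        = ν.rnDeriv volume t := by
    filter_upwards [hbes] with t h1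
    exact (h1.comp hrtend).limsup_eq
  -- finiteness of the dominating function
  have hMnn : ∀ t, 0 ≤ M t := fun t =>
    Real.iSup_nonneg fun s => Real.iSup_nonneg fun _ =>
      div_nonneg ENNReal.toReal_nonneg ENNReal.toReal_nonneg
  have hgfin : (∫⁻ t, ENNReal.ofReal (M t) ∂volume) ≠ ⊤ :=
    ((hasFiniteIntegral_iff_ofReal (Eventually.of_forall hMnn)).1
      hint.hasFiniteIntegral).ne
  -- the key inequality via the dominated limsup lemma
  have hchain : ν Set.univ ≤ ∫⁻ t, ν.rnDeriv volume t ∂volume := by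
    have h1 : limsup (fun n =>
        ∫⁻ t, ν (closedBall t (r n)) / volume (closedBall t (r n)) ∂volume) atTop
        = ν Set.univ := by
      simp only [hfub]
      exact limsup_const _
    calc ν Set.univ
        = limsup (fun n =>
            ∫⁻ t, ν (closedBall t (r n)) / volume (closedBall t (r n)) ∂volume) atTop := h1.symm
      _ ≤ ∫⁻ t, limsup (fun n =>
            ν (closedBall t (r n)) / volume (closedBall t (r n))) atTop ∂volume :=
          limsup_lintegral_le _ hFmeas (fun n => hdom.mono fun t ht => ht n) hgfin
      _ = ∫⁻ t, ν.rnDeriv volume t ∂volume := lintegral_congr_ae hlimsup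
  have heq : (∫⁻ t, ν.rnDeriv volume t ∂volume) = ν Set.univ :=
    le_antisymm (Measure.lintegral_rnDeriv_le) hchain
  -- absolute continuity
  have hdecomp := Measure.haveLebesgueDecomposition_add ν volume
  have hsing : ν.singularPart volume Set.univ = 0 := by
    have h2 : ν Set.univ = ν.singularPart volume Set.univ
        + ∫⁻ t, ν.rnDeriv volume t ∂volume := by
      conv_lhs => rw [hdecomp]
      rw [Measure.add_apply, withDensity_apply _ MeasurableSet.univ, setLIntegral_univ]
    rw [heq] at h2
    have h3 : ν Set.univ + 0 = ν Set.univ + ν.singularPart volume Set.univ := by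
      rw [add_zero, add_comm]
      exact h2
    exact ((ENNReal.add_right_inj (measure_ne_top ν _)).1 h3).symm
  have hsing0 : ν.singularPart volume = 0 := Measure.measure_univ_eq_zero.1 hsing
  have hwd : ν = volume.withDensity (ν.rnDeriv volume) := by
    conv_lhs => rw [hdecomp]
    rw [hsing0, zero_add]
  have hac : ν ≪ volume := by
    rw [hwd]
    exact withDensity_absolutelyContinuous _ _
  have hint2 : (∫ t, (ν.rnDeriv volume t).toReal ∂volume) = (ν Set.univ).toReal := by
    rw [integral_toReal (Measure.measurable_rnDeriv ν volume).aemeasurable hfin, heq]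
  refine ⟨hac, hint2, fun hν0 => ?_⟩
  rw [pos_iff_ne_zero]
  intro h
  have hz : (fun t => ν.rnDeriv volume t) =ᵐ[(volume : Measure (EuclideanSpace ℝ (Fin m)))]
      (fun _ => (0:ℝ≥0∞)) := by
    rw [Filter.EventuallyEq, ae_iff]
    refine measure_mono_null ?_ h
    intro x hx
    simpa [pos_iff_ne_zero] using hx
  have hzero : ν Set.univ = 0 := by
    rw [← heq, lintegral_congr_ae hz, lintegral_zero]
  exact hν0 (Measure.measure_univ_eq_zero.1 hzero)
end
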